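/- arXiv:1809.06271 — 7 statements merged into one kernel-verified Lean document; each statement's English description precedes it below -/
import Mathlib

section
/- Let H ∈ F_q[X,Y] be a nonzero polynomial and let T be the tangent cone of H at the origin. If there exists a homogeneous linear polynomial L ∈ F_q[X,Y] such that L divides T but L^2 does not divide T (a reduced linear factor of T over F_q), then H has an absolutely irreducible factor over F_q. -/
open MvPolynomial

noncomputable section

/-- The smallest total degree of a monomial occurring in `P`. -/
def minMonomialDeg {K : Type*} [Field K] (P : MvPolynomial (Fin 2) K) : ℕ :=
  sInf {m : ℕ | ∃ s ∈ P.support, (s.sum fun _ e => e) = m}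

/-- The tangent cone of `P` at the origin: the nonzero homogeneous component of
lowest total degree (for `P ≠ 0`). -/
def tangentCone {K : Type*} [Field K] (P : MvPolynomial (Fin 2) K) : MvPolynomial (Fin 2) K :=
  homogeneousComponent (minMonomialDeg P) P

/-- `P ∈ F_q[X,Y]` has a factor of positive degree that is absolutely irreducible,
i.e. irreducible over an algebraic closure of `F_q`. -/
def HasAbsIrrFactor {K : Type*} [Field K] (P : MvPolynomial (Fin 2) K) : Prop :=
  ∃ Q : MvPolynomial (Fin 2) K, Q ∣ P ∧ 0 < Q.totalDegree ∧
    Irreducible (MvPolynomial.map (algebraMap K (AlgebraicClosure K)) Q)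

namespace TCAux

variable {K : Type*} [Field K]

lemma finsupp_sum_eq_degree (s : Fin 2 →₀ ℕ) : (s.sum fun _ e => e) = s.degree := rfl

def phi : MvPolynomial (Fin 2) K →+* Polynomial (MvPolynomial (Fin 2) K) :=
  MvPolynomial.eval₂Hom (Polynomial.C.comp MvPolynomial.C)
    (fun i => Polynomial.C (MvPolynomial.X i) * Polynomial.X)

lemma phi_monomial (s : Fin 2 →₀ ℕ) (c : K) :
    phi (monomial s c) = Polynomial.C (monomial s c) * Polynomial.X ^ s.degree := by
  rw [phi, eval₂Hom_monomial]
  rw [Finsupp.prod]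
  simp only [mul_pow, ← Polynomial.C_pow]
  rw [Finset.prod_mul_distrib, ← map_prod, Finset.prod_pow_eq_pow_sum]
  rw [monomial_eq, Finsupp.prod, Finsupp.degree_apply, map_mul]
  simp only [RingHom.coe_comp, Function.comp_apply]
  ring

lemma coeff_phi (P : MvPolynomial (Fin 2) K) (n : ℕ) :
    (phi P).coeff n = homogeneousComponent n P := by
  induction P using MvPolynomial.induction_on' with
  | add p q hp hq => simp [map_add, hp, hq]
  | monomial s c =>
    rw [phi_monomial]
    ext u
    rw [Polynomial.coeff_C_mul, Polynomial.coeff_X_pow, coeff_homogeneousComponent]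
    rw [mul_ite, mul_one, mul_zero]
    split_ifs with h1 h2 h2
    · rfl
    · rw [coeff_monomial, if_neg]; rintro rfl; exact h2 h1.symm
    · rw [coeff_zero, coeff_monomial, if_neg]; rintro rfl; exact h1 h2.symm
    · simp


lemma eval_one_phi (P : MvPolynomial (Fin 2) K) :
    Polynomial.eval 1 (phi P) = P := by
  induction P using MvPolynomial.induction_on' with
  | monomial s c => rw [phi_monomial]; simp
  | add p q hp hq => simp [map_add, hp, hq]

lemma phi_ne_zero {P : MvPolynomial (Fin 2) K} (hP : P ≠ 0) : phi P ≠ 0 := fun h0 =>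
  hP (by rw [← eval_one_phi P, h0, Polynomial.eval_zero])

lemma hc_ne_zero_iff (n : ℕ) (P : MvPolynomial (Fin 2) K) :
    homogeneousComponent n P ≠ 0 ↔ ∃ s ∈ P.support, s.degree = n := by
  constructor
  · intro h
    obtain ⟨u, hu⟩ := MvPolynomial.ne_zero_iff.mp h
    rw [coeff_homogeneousComponent] at hu
    by_cases hd : u.degree = n
    · rw [if_pos hd] at hu
      exact ⟨u, mem_support_iff.mpr hu, hd⟩
    · rw [if_neg hd] at hu; exact absurd rfl hu
  · rintro ⟨s, hs, rfl⟩
    intro h0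
    have := coeff_homogeneousComponent (R := K) (σ := Fin 2) s.degree P s
    rw [h0, if_pos rfl] at this
    exact mem_support_iff.mp hs this.symm

lemma minMonomialDeg_eq_natTrailingDegree {P : MvPolynomial (Fin 2) K} (hP : P ≠ 0) :
    minMonomialDeg P = (phi P).natTrailingDegree := by
  have hSne : ∃ m, m ∈ {m : ℕ | ∃ s ∈ P.support, (s.sum fun _ e => e) = m} := by
    obtain ⟨s, hs⟩ := MvPolynomial.support_nonempty.mpr hP
    exact ⟨s.degree, s, hs, rfl⟩
  apply le_antisymm
  · have h1 : (phi P).trailingCoeff ≠ 0 :=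
      Polynomial.trailingCoeff_nonzero_iff_nonzero.mpr (phi_ne_zero hP)
    rw [Polynomial.trailingCoeff, coeff_phi] at h1
    obtain ⟨s, hs, hd⟩ := (hc_ne_zero_iff _ _).mp h1
    exact Nat.sInf_le ⟨s, hs, hd⟩
  · have h2 := Nat.sInf_mem hSne
    obtain ⟨s, hs, hd⟩ := h2
    have h3 : (phi P).coeff (minMonomialDeg P) ≠ 0 := by
      rw [coeff_phi]
      exact (hc_ne_zero_iff _ _).mpr ⟨s, hs, hd⟩
    exact Polynomial.natTrailingDegree_le_of_ne_zero h3

lemma tangentCone_eq_trailingCoeff {P : MvPolynomial (Fin 2) K} (hP : P ≠ 0) :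
    tangentCone P = (phi P).trailingCoeff := by
  rw [tangentCone, ← coeff_phi, minMonomialDeg_eq_natTrailingDegree hP,
    Polynomial.trailingCoeff]

lemma tangentCone_ne_zero {P : MvPolynomial (Fin 2) K} (hP : P ≠ 0) :
    tangentCone P ≠ 0 := by
  rw [tangentCone_eq_trailingCoeff hP]
  exact Polynomial.trailingCoeff_nonzero_iff_nonzero.mpr (phi_ne_zero hP)

lemma tangentCone_mul {P Q : MvPolynomial (Fin 2) K} (hP : P ≠ 0) (hQ : Q ≠ 0) :
    tangentCone (P * Q) = tangentCone P * tangentCone Q := by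
  rw [tangentCone_eq_trailingCoeff (mul_ne_zero hP hQ), map_mul,
    Polynomial.trailingCoeff_mul, tangentCone_eq_trailingCoeff hP,
    tangentCone_eq_trailingCoeff hQ]

lemma totalDegree_eq_natDegree {P : MvPolynomial (Fin 2) K} (hP : P ≠ 0) :
    P.totalDegree = (phi P).natDegree := by
  apply le_antisymm
  · apply Finset.sup_le
    intro s hs
    apply Polynomial.le_natDegree_of_ne_zero
    rw [coeff_phi]
    exact (hc_ne_zero_iff _ _).mpr ⟨s, hs, rfl⟩
  · have h1 : (phi P).leadingCoeff ≠ 0 :=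
      Polynomial.leadingCoeff_ne_zero.mpr (phi_ne_zero hP)
    rw [Polynomial.leadingCoeff, coeff_phi] at h1
    obtain ⟨s, hs, hd⟩ := (hc_ne_zero_iff _ _).mp h1
    rw [← hd]
    exact Finset.le_sup (f := fun s => s.sum fun _ e => e) hs

lemma totalDegree_mul_eq {P Q : MvPolynomial (Fin 2) K} (hP : P ≠ 0) (hQ : Q ≠ 0) :
    (P * Q).totalDegree = P.totalDegree + Q.totalDegree := by
  rw [totalDegree_eq_natDegree (mul_ne_zero hP hQ), map_mul,
    Polynomial.natDegree_mul (phi_ne_zero hP) (phi_ne_zero hQ),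
    totalDegree_eq_natDegree hP, totalDegree_eq_natDegree hQ]

lemma eq_C_of_totalDegree_eq_zero {P : MvPolynomial (Fin 2) K}
    (h : P.totalDegree = 0) : P = C (coeff 0 P) := by
  have hmem := (totalDegree_eq_zero_iff (Fin 2) P).mp h
  ext m
  by_cases hm : m = 0
  · subst hm; simp
  · rw [coeff_C, if_neg (fun h' => hm h'.symm)]
    by_contra hc
    have hmm : m ∈ P.support := mem_support_iff.mpr hc
    exact hm (Finsupp.ext fun x => hmem m hmm x)

lemma exists_C_of_isUnit {A : MvPolynomial (Fin 2) K} (h : IsUnit A) :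
    ∃ c : K, c ≠ 0 ∧ A = C c := by
  obtain ⟨u, rfl⟩ := h
  have h1 : (u : MvPolynomial (Fin 2) K) * ↑u⁻¹ = 1 := u.mul_inv
  have hu0 : (u : MvPolynomial (Fin 2) K) ≠ 0 := u.ne_zero
  have hv0 : (↑u⁻¹ : MvPolynomial (Fin 2) K) ≠ 0 := u⁻¹.ne_zero
  have h2 : (u : MvPolynomial (Fin 2) K).totalDegree = 0 := by
    have := totalDegree_mul_eq hu0 hv0
    rw [h1, totalDegree_one] at this
    omega
  have h3 := eq_C_of_totalDegree_eq_zero h2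
  refine ⟨coeff 0 (u : MvPolynomial (Fin 2) K), fun hc => ?_, h3⟩
  rw [hc, map_zero] at h3
  exact hu0 h3

lemma irreducible_of_totalDegree_one {A : MvPolynomial (Fin 2) K}
    (h : A.totalDegree = 1) : Irreducible A := by
  have hA0 : A ≠ 0 := by rintro rfl; simp at h
  constructor
  · intro hu
    obtain ⟨c, hc0, hc⟩ := exists_C_of_isUnit hu
    rw [hc, totalDegree_C] at h
    exact one_ne_zero h.symm
  · intro B D hBD
    have hB0 : B ≠ 0 := by rintro rfl; rw [zero_mul] at hBD; exact hA0 hBD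
    have hD0 : D ≠ 0 := by rintro rfl; rw [mul_zero] at hBD; exact hA0 hBD
    have h2 : B.totalDegree + D.totalDegree = 1 := by
      rw [← totalDegree_mul_eq hB0 hD0, ← hBD, h]
    rcases Nat.eq_zero_or_pos B.totalDegree with hB | hB
    · left
      have := eq_C_of_totalDegree_eq_zero hB
      rw [this]
      apply IsUnit.map
      exact isUnit_iff_ne_zero.mpr (fun hc => hB0 (by rw [this, hc, map_zero]))
    · right
      have hD : D.totalDegree = 0 := by omega
      have := eq_C_of_totalDegree_eq_zero hD
      rw [this]
      apply IsUnit.map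
      exact isUnit_iff_ne_zero.mpr (fun hc => hD0 (by rw [this, hc, map_zero]))


variable {K' : Type*} [Field K']

lemma homogeneousComponent_map (f : K →+* K') (n : ℕ) (P : MvPolynomial (Fin 2) K) :
    homogeneousComponent n (map f P) = map f (homogeneousComponent n P) := by
  ext u
  rw [coeff_homogeneousComponent, coeff_map, coeff_map, coeff_homogeneousComponent,
    apply_ite f, map_zero]

lemma minMonomialDeg_map {f : K →+* K'} (hf : Function.Injective f)
    (P : MvPolynomial (Fin 2) K) : minMonomialDeg (map f P) = minMonomialDeg P := by
  unfold minMonomialDeg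
  rw [MvPolynomial.support_map_of_injective _ hf]

lemma tangentCone_map {f : K →+* K'} (hf : Function.Injective f)
    (P : MvPolynomial (Fin 2) K) : tangentCone (map f P) = map f (tangentCone P) := by
  rw [tangentCone, tangentCone, minMonomialDeg_map hf, homogeneousComponent_map]

lemma totalDegree_map_inj {f : K →+* K'} (hf : Function.Injective f)
    (P : MvPolynomial (Fin 2) K) : (map f P).totalDegree = P.totalDegree := by
  rw [MvPolynomial.totalDegree, MvPolynomial.totalDegree,
    MvPolynomial.support_map_of_injective _ hf]

lemma tangentCone_C (c : K) : tangentCone (C c : MvPolynomial (Fin 2) K) = C c := by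
  by_cases hc : c = 0
  · subst hc; rw [map_zero]; rw [tangentCone, map_zero]
  · have hmin : minMonomialDeg (C c : MvPolynomial (Fin 2) K) = 0 := by
      apply Nat.sInf_eq_zero.mpr
      left
      exact ⟨0, mem_support_iff.mpr (by rwa [coeff_zero_C]), Finsupp.sum_zero_index⟩
    rw [tangentCone, hmin, homogeneousComponent_zero, coeff_zero_C]

lemma tangentCone_one : tangentCone (1 : MvPolynomial (Fin 2) K) = 1 := by
  rw [← C_1, tangentCone_C]

lemma tangentCone_multiset_prod (s : Multiset (MvPolynomial (Fin 2) K))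
    (h : ∀ x ∈ s, x ≠ 0) :
    tangentCone s.prod = (s.map tangentCone).prod := by
  induction s using Multiset.induction_on with
  | empty => simpa using tangentCone_one
  | cons a t ih =>
    rw [Multiset.prod_cons, Multiset.map_cons, Multiset.prod_cons]
    have ha : a ≠ 0 := h a (Multiset.mem_cons_self a t)
    have ht : ∀ x ∈ t, x ≠ 0 := fun x hx => h x (Multiset.mem_cons_of_mem hx)
    have hp : t.prod ≠ 0 := Multiset.prod_ne_zero (fun h0 => (ht 0 h0) rfl)
    rw [tangentCone_mul ha hp, ih ht]

lemma tangentCone_dvd {P Q : MvPolynomial (Fin 2) K} (hQ : Q ≠ 0) (h : P ∣ Q) :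
    tangentCone P ∣ tangentCone Q := by
  obtain ⟨M, rfl⟩ := h
  have hP : P ≠ 0 := fun h0 => hQ (by rw [h0, zero_mul])
  have hM : M ≠ 0 := fun h0 => hQ (by rw [h0, mul_zero])
  rw [tangentCone_mul hP hM]
  exact dvd_mul_right _ _

lemma exists_irred_factor (A : MvPolynomial (Fin 2) K) (hA : A ≠ 0)
    (L : MvPolynomial (Fin 2) K) (hL : Prime L) (h : L ∣ tangentCone A) :
    ∃ Q, Irreducible Q ∧ Q ∣ A ∧ L ∣ tangentCone Q := by
  classical
  obtain ⟨u, hu⟩ := (UniqueFactorizationMonoid.factors_prod hA)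
  set s := UniqueFactorizationMonoid.factors A with hs
  have hne : ∀ x ∈ s, x ≠ 0 := fun x hx =>
    (UniqueFactorizationMonoid.irreducible_of_factor x hx).ne_zero
  have hsprod : s.prod ≠ 0 := Multiset.prod_ne_zero (fun h0 => (hne 0 h0) rfl)
  obtain ⟨c, hc0, hc⟩ := exists_C_of_isUnit u.isUnit
  have hA' : A = s.prod * C c := by rw [← hu, hc]
  have htc : tangentCone A = (s.map tangentCone).prod * C c := by
    rw [hA', tangentCone_mul hsprod (fun h0 => hc0 (by
      rwa [← C_0, C_inj] at h0)), tangentCone_C, tangentCone_multiset_prod s hne]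
  rw [htc] at h
  have hunit : IsUnit (C c : MvPolynomial (Fin 2) K) :=
    IsUnit.map _ (isUnit_iff_ne_zero.mpr hc0)
  have h2 : L ∣ (s.map tangentCone).prod := hunit.dvd_mul_right.mp h
  obtain ⟨a, ha, hdvd⟩ := hL.exists_mem_multiset_dvd h2
  obtain ⟨Q, hQs, rfl⟩ := Multiset.mem_map.mp ha
  exact ⟨Q, UniqueFactorizationMonoid.irreducible_of_factor Q hQs,
    UniqueFactorizationMonoid.dvd_of_mem_factors hQs, hdvd⟩


lemma degree_fin2 (m : Fin 2 →₀ ℕ) : m.degree = m 0 + m 1 := by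
  rw [Finsupp.degree_apply, Finset.sum_subset (Finset.subset_univ m.support)
    (fun x _ hx => Finsupp.notMem_support_iff.mp hx), Fin.sum_univ_two]

lemma eq_single_of_degree_one {m : Fin 2 →₀ ℕ} (h : m.degree = 1) :
    m = Finsupp.single 0 1 ∨ m = Finsupp.single 1 1 := by
  rw [degree_fin2] at h
  rcases Nat.eq_zero_or_pos (m 0) with h0 | h0
  · right
    have h1 : m 1 = 1 := by omega
    ext i
    fin_cases i <;> simp [Finsupp.single_apply, h0, h1]
  · left
    have h0' : m 0 = 1 := by omega
    have h1 : m 1 = 0 := by omega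
    ext i
    fin_cases i <;> simp [Finsupp.single_apply, h0', h1]

lemma linear_repr {L : MvPolynomial (Fin 2) K} (hL : L.IsHomogeneous 1) :
    L = C (coeff (Finsupp.single 0 1) L) * X 0 + C (coeff (Finsupp.single 1 1) L) * X 1 := by
  have hsingle : (Finsupp.single (0 : Fin 2) (1 : ℕ)) ≠ Finsupp.single 1 1 := by
    simp [Finsupp.single_eq_single_iff]
  ext m
  rw [coeff_add, coeff_C_mul, coeff_C_mul, coeff_X', coeff_X']
  by_cases h0 : m = Finsupp.single 0 1
  · subst h0
    rw [if_pos rfl, if_neg (fun h => hsingle h.symm)]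
    simp
  · by_cases h1 : m = Finsupp.single 1 1
    · subst h1
      rw [if_pos rfl, if_neg (fun h => hsingle h)]
      simp
    · rw [if_neg (fun h => h0 h.symm), if_neg (fun h => h1 h.symm)]
      simp only [mul_zero, add_zero]
      by_contra hc
      have hd : m.degree = 1 := by
        rw [Finsupp.degree_eq_weight_one]
        exact hL hc
      rcases eq_single_of_degree_one hd with h | h
      · exact h0 h
      · exact h1 h

lemma finSuccEquiv_map (f : K →+* K') (A : MvPolynomial (Fin 2) K) :
    finSuccEquiv K' 1 (map f A) = Polynomial.map (map f) (finSuccEquiv K 1 A) := by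
  induction A using MvPolynomial.induction_on with
  | C c => simp [finSuccEquiv_apply]
  | add p q hp hq => simp [map_add, hp, hq]
  | mul_X p i hp =>
    rw [map_mul, map_mul, map_mul, Polynomial.map_mul, hp]
    congr 1
    refine Fin.cases ?_ ?_ i
    · rw [map_X, finSuccEquiv_X_zero, finSuccEquiv_X_zero, Polynomial.map_X]
    · intro j
      rw [map_X, finSuccEquiv_X_succ, finSuccEquiv_X_succ, Polynomial.map_C, map_X]

lemma descent_aux (f : K →+* K') {L F : MvPolynomial (Fin 2) K}
    (hLlin : L.IsHomogeneous 1) (ha : coeff (Finsupp.single 0 1) L ≠ 0)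
    (h : map f L ^ 2 ∣ map f F) : L ^ 2 ∣ F := by
  set a := coeff (Finsupp.single 0 1) L with ha'
  set b := coeff (Finsupp.single 1 1) L with hb'
  set M : MvPolynomial (Fin 2) K := X 0 + C (a⁻¹ * b) * X 1 with hM
  have hab : a * (a⁻¹ * b) = b := by field_simp
  have hLM : C a * M = L := by
    rw [hM, mul_add, ← mul_assoc, ← C_mul, hab]
    exact (linear_repr hLlin).symm
  have hunit : IsUnit (C a⁻¹ : MvPolynomial (Fin 2) K) :=
    IsUnit.map _ (isUnit_iff_ne_zero.mpr (inv_ne_zero ha))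
  have hassoc : Associated L M := by
    refine ⟨hunit.unit, ?_⟩
    rw [hunit.unit_spec, ← hLM, mul_comm (C a) M, mul_assoc, ← C_mul,
      mul_inv_cancel₀ ha, C_1, mul_one]
  have hassoc2 : Associated (L ^ 2) (M ^ 2) := hassoc.pow_pow
  rw [hassoc2.dvd_iff_dvd_left]
  -- move hypothesis to M
  have h' : map f M ^ 2 ∣ map f F := by
    have := (hassoc2.map (map f : MvPolynomial (Fin 2) K →+* MvPolynomial (Fin 2) K')).dvd_iff_dvd_left
      (c := map f F)
    rw [map_pow, map_pow] at this
    exact this.mp h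
  -- transfer to Polynomial world
  have hEM : finSuccEquiv K 1 M = Polynomial.X + Polynomial.C (C (a⁻¹ * b) * X 0) := by
    have h1 : (X 1 : MvPolynomial (Fin 2) K) = X (Fin.succ 0) := rfl
    rw [hM, map_add, map_mul, h1, finSuccEquiv_X_zero, finSuccEquiv_X_succ]
    congr 1
    rw [show ((finSuccEquiv K 1) (C (a⁻¹ * b)) : Polynomial (MvPolynomial (Fin 1) K))
        = Polynomial.C (C (a⁻¹ * b)) by simp [finSuccEquiv_apply], ← Polynomial.C_mul]
  have hmonic : ((finSuccEquiv K 1 M) ^ 2).Monic := by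
    rw [hEM]; exact (Polynomial.monic_X_add_C _).pow 2
  have hinj : Function.Injective
      (map f : MvPolynomial (Fin 1) K →+* MvPolynomial (Fin 1) K') :=
    MvPolynomial.map_injective f f.injective
  have hdvd2 : Polynomial.map (map f) ((finSuccEquiv K 1 M) ^ 2) ∣
      Polynomial.map (map f) (finSuccEquiv K 1 F) := by
    obtain ⟨D, hD⟩ := h'
    refine ⟨finSuccEquiv K' 1 D, ?_⟩
    rw [Polynomial.map_pow, ← finSuccEquiv_map f M, ← finSuccEquiv_map f F, hD,
      map_mul, map_pow]
  have hdvd3 : (finSuccEquiv K 1 M) ^ 2 ∣ finSuccEquiv K 1 F :=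
    (Polynomial.map_dvd_map _ hinj hmonic).mp hdvd2
  obtain ⟨D, hD⟩ := hdvd3
  refine ⟨(finSuccEquiv K 1).symm D, ?_⟩
  apply (finSuccEquiv K 1).injective
  rw [map_mul, map_pow, AlgEquiv.apply_symm_apply]
  exact hD


lemma rename_swap_involutive {R : Type*} [CommSemiring R] (A : MvPolynomial (Fin 2) R) :
    rename (⇑(Equiv.swap (0 : Fin 2) 1)) (rename (⇑(Equiv.swap (0 : Fin 2) 1)) A) = A := by
  rw [rename_rename]
  have h : (⇑(Equiv.swap (0 : Fin 2) 1) ∘ ⇑(Equiv.swap (0 : Fin 2) 1)) = id :=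
    funext fun x => Equiv.swap_apply_self 0 1 x
  rw [h, rename_id, AlgHom.id_apply]

lemma descent (f : K →+* K') {L F : MvPolynomial (Fin 2) K} (hL0 : L ≠ 0)
    (hLlin : L.IsHomogeneous 1) (h : map f L ^ 2 ∣ map f F) : L ^ 2 ∣ F := by
  by_cases ha : coeff (Finsupp.single 0 1) L ≠ 0
  · exact descent_aux f hLlin ha h
  · push_neg at ha
    have hb : coeff (Finsupp.single 1 1) L ≠ 0 := by
      intro hb
      apply hL0
      rw [linear_repr hLlin, ha, hb]
      simp
    set e := Equiv.swap (0 : Fin 2) 1 with he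
    set L' := rename (⇑e) L with hL'
    set F' := rename (⇑e) F with hF'
    have hL'lin : L'.IsHomogeneous 1 := hLlin.rename_isHomogeneous
    have ha' : coeff (Finsupp.single 0 1) L' ≠ 0 := by
      have h1 : Finsupp.mapDomain (⇑e) (Finsupp.single (1 : Fin 2) (1 : ℕ))
          = Finsupp.single 0 1 := by
        rw [Finsupp.mapDomain_single, he, Equiv.swap_apply_right]
      rw [hL', ← h1, coeff_rename_mapDomain _ e.injective]
      exact hb
    have h2 : map f L' ^ 2 ∣ map f F' := by
      obtain ⟨D, hD⟩ := h
      refine ⟨rename (⇑e) D, ?_⟩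
      rw [hL', hF', map_rename, map_rename, hD, map_mul, map_pow]
    have h3 : L' ^ 2 ∣ F' := descent_aux f hL'lin ha' h2
    obtain ⟨D, hD⟩ := h3
    refine ⟨rename (⇑e) D, ?_⟩
    have := congrArg (rename (⇑e)) hD
    rw [rename_swap_involutive, map_mul, map_pow, hL', rename_swap_involutive] at this
    exact this


lemma mem_range_of_pow_card_eq [Fintype K] {x : K'} (f : K →+* K')
    (hx : x ^ Fintype.card K = x) : x ∈ Set.range f := by
  classical
  by_contra hmem
  have h1 : (1 : ℕ) < Fintype.card K := Fintype.one_lt_card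
  set F : Polynomial K' := Polynomial.X ^ Fintype.card K - Polynomial.X with hF
  have hdeg : F.natDegree = Fintype.card K :=
    FiniteField.X_pow_card_sub_X_natDegree_eq K' h1
  have hF0 : F ≠ 0 := FiniteField.X_pow_card_sub_X_ne_zero K' h1
  set Z : Finset K' := insert x (Finset.univ.image f) with hZ
  have hxni : x ∉ Finset.univ.image f := by
    intro hmm
    obtain ⟨a, -, rfl⟩ := Finset.mem_image.mp hmm
    exact hmem ⟨a, rfl⟩
  have hcard : Z.card = Fintype.card K + 1 := by
    rw [hZ, Finset.card_insert_of_notMem hxni,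
      Finset.card_image_of_injective _ f.injective, Finset.card_univ]
  have hroots : Z.val ⊆ F.roots := by
    intro z hz
    rw [Finset.mem_val] at hz
    rw [Polynomial.mem_roots']
    refine ⟨hF0, ?_⟩
    rw [Polynomial.IsRoot, hF]
    simp only [Polynomial.eval_sub, Polynomial.eval_pow, Polynomial.eval_X]
    rcases Finset.mem_insert.mp hz with rfl | hz2
    · rw [hx, sub_self]
    · obtain ⟨a, -, rfl⟩ := Finset.mem_image.mp hz2
      rw [← map_pow, FiniteField.pow_card, sub_self]
  have hle := Polynomial.card_le_degree_of_subset_roots hroots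
  rw [hdeg] at hle
  omega

lemma exists_preimage_of_coeffs (f : K →+* K')
    (A : MvPolynomial (Fin 2) K') (h : ∀ m, coeff m A ∈ Set.range f) :
    ∃ A₀ : MvPolynomial (Fin 2) K, map f A₀ = A := by
  classical
  refine ⟨∑ m ∈ A.support, monomial m (Classical.choose (h m)), ?_⟩
  rw [map_sum]
  conv_rhs => rw [A.as_sum]
  apply Finset.sum_congr rfl
  intro m _
  rw [map_monomial, Classical.choose_spec (h m)]

end TCAux

theorem reduced_linear_factor_of_tangent_cone
    {K : Type*} [Field K] [Fintype K]
    (H : MvPolynomial (Fin 2) K) (hH : H ≠ 0)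
    (L : MvPolynomial (Fin 2) K) (hL0 : L ≠ 0) (hLlin : L.IsHomogeneous 1)
    (hdvd : L ∣ tangentCone H) (hnotdvd : ¬ L ^ 2 ∣ tangentCone H) :
    HasAbsIrrFactor H := by
  classical
  have hLdeg : L.totalDegree = 1 := hLlin.totalDegree hL0
  have hLirr : Irreducible L := TCAux.irreducible_of_totalDegree_one hLdeg
  have hLprime : Prime L := UniqueFactorizationMonoid.irreducible_iff_prime.mp hLirr
  obtain ⟨P, hPirr, hPdvdH, hLP⟩ := TCAux.exists_irred_factor H hH L hLprime hdvd
  have hP0 : P ≠ 0 := hPirr.ne_zero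
  have hPdeg : 0 < P.totalDegree := by
    rcases Nat.eq_zero_or_pos P.totalDegree with h0 | h0
    · exfalso
      have hPC := TCAux.eq_C_of_totalDegree_eq_zero h0
      have hco : coeff 0 P ≠ 0 := fun hc => hP0 (by rw [hPC, hc, map_zero])
      exact hPirr.not_isUnit (hPC ▸ IsUnit.map _ (isUnit_iff_ne_zero.mpr hco))
    · exact h0
  have htcPH : tangentCone P ∣ tangentCone H := TCAux.tangentCone_dvd hH hPdvdH
  refine ⟨P, hPdvdH, hPdeg, ?_⟩
  set f : K →+* AlgebraicClosure K := algebraMap K (AlgebraicClosure K) with hfdef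
  have hfinj : Function.Injective f := f.injective
  set p := ringChar K with hp'
  haveI : CharP K p := ringChar.charP K
  obtain ⟨n, hp, hq⟩ := FiniteField.card K p
  haveI : Fact p.Prime := ⟨hp⟩
  haveI : CharP (AlgebraicClosure K) p :=
    charP_of_injective_algebraMap hfinj p
  have hsurj : Function.Surjective (iterateFrobenius (AlgebraicClosure K) p n) := by
    intro y
    obtain ⟨z, hz⟩ := IsAlgClosed.exists_pow_nat_eq y (pow_pos hp.pos (n : ℕ))
    exact ⟨z, by rw [iterateFrobenius_def]; exact hz⟩
  set e : AlgebraicClosure K ≃+* AlgebraicClosure K :=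
    RingEquiv.ofBijective (iterateFrobenius (AlgebraicClosure K) p n)
      ⟨(iterateFrobenius (AlgebraicClosure K) p n).injective, hsurj⟩ with he'
  have he : ∀ x : AlgebraicClosure K, e x = x ^ Fintype.card K := by
    intro x
    show iterateFrobenius (AlgebraicClosure K) p n x = x ^ Fintype.card K
    rw [iterateFrobenius_def, hq]
  have hef : ∀ k : K, e (f k) = f k := fun k => by
    rw [he, ← map_pow, FiniteField.pow_card]
  have hfixmap : ∀ A : MvPolynomial (Fin 2) K,
      map (e : AlgebraicClosure K →+* AlgebraicClosure K) (map f A) = map f A := by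
    intro A
    rw [map_map]
    have hcomp : ((e : AlgebraicClosure K →+* AlgebraicClosure K)).comp f = f :=
      RingHom.ext fun k => hef k
    rw [hcomp]
  have heinj : Function.Injective
      ((e : AlgebraicClosure K →+* AlgebraicClosure K) :
        AlgebraicClosure K → AlgebraicClosure K) := e.injective
  have hPbar0 : map f P ≠ 0 := fun h0 =>
    hP0 (MvPolynomial.map_injective f hfinj (by rw [h0, map_zero]))
  have hLbar_irr : Irreducible (map f L) := by
    apply TCAux.irreducible_of_totalDegree_one
    rw [TCAux.totalDegree_map_inj hfinj, hLdeg]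
  have hLbar_prime : Prime (map f L) :=
    UniqueFactorizationMonoid.irreducible_iff_prime.mp hLbar_irr
  have hLtcPbar : map f L ∣ tangentCone (map f P) := by
    rw [TCAux.tangentCone_map hfinj]
    exact map_dvd (MvPolynomial.map f) hLP
  obtain ⟨Q, hQirr, hQdvd, hLQ⟩ :=
    TCAux.exists_irred_factor (map f P) hPbar0 (map f L) hLbar_prime hLtcPbar
  have hQ0 : Q ≠ 0 := hQirr.ne_zero
  have hFrQirr : Irreducible (map (e : AlgebraicClosure K →+* AlgebraicClosure K) Q) := by
    have h1 := (MulEquiv.irreducible_iff (MvPolynomial.mapEquiv (Fin 2) e) (x := Q)).mpr hQirr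
    simpa [MvPolynomial.mapEquiv_apply] using h1
  have hclaim : Associated (map (e : AlgebraicClosure K →+* AlgebraicClosure K) Q) Q := by
    by_contra hassoc
    have hFrQdvd : map (e : AlgebraicClosure K →+* AlgebraicClosure K) Q ∣ map f P := by
      have h2 := map_dvd (MvPolynomial.map (e : AlgebraicClosure K →+* AlgebraicClosure K)) hQdvd
      rwa [hfixmap P] at h2
    have hprimeQ : Prime (map (e : AlgebraicClosure K →+* AlgebraicClosure K) Q) :=
      UniqueFactorizationMonoid.irreducible_iff_prime.mp hFrQirr
    obtain ⟨M, hM⟩ := hQdvd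
    have hFrDvdM : map (e : AlgebraicClosure K →+* AlgebraicClosure K) Q ∣ M := by
      rcases hprimeQ.2.2 Q M (hM ▸ hFrQdvd) with hcase | hcase
      · exact absurd (hFrQirr.associated_of_dvd hQirr hcase) hassoc
      · exact hcase
    obtain ⟨N, hN⟩ := hFrDvdM
    have hM0 : M ≠ 0 := fun h0 => hPbar0 (by rw [hM, h0, mul_zero])
    have hFrQ0 : map (e : AlgebraicClosure K →+* AlgebraicClosure K) Q ≠ 0 := hFrQirr.ne_zero
    have hN0 : N ≠ 0 := fun h0 => hM0 (by rw [hN, h0, mul_zero])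
    have htc : tangentCone (map f P) = tangentCone Q *
        (tangentCone (map (e : AlgebraicClosure K →+* AlgebraicClosure K) Q) * tangentCone N) := by
      rw [hM, hN, TCAux.tangentCone_mul hQ0 (mul_ne_zero hFrQ0 hN0),
        TCAux.tangentCone_mul hFrQ0 hN0]
    have hLFr : map f L ∣ tangentCone (map (e : AlgebraicClosure K →+* AlgebraicClosure K) Q) := by
      rw [TCAux.tangentCone_map heinj]
      have h3 := map_dvd (MvPolynomial.map (e : AlgebraicClosure K →+* AlgebraicClosure K)) hLQ
      rwa [hfixmap L] at h3
    have hL2 : map f L ^ 2 ∣ tangentCone (map f P) := by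
      rw [htc, sq]
      exact mul_dvd_mul hLQ (dvd_mul_of_dvd_left hLFr _)
    rw [TCAux.tangentCone_map hfinj] at hL2
    have hL2' : L ^ 2 ∣ tangentCone P := by
      exact TCAux.descent f hL0 hLlin hL2
    exact hnotdvd (hL2'.trans htcPH)
  obtain ⟨s, hs⟩ := MvPolynomial.support_nonempty.mpr hQ0
  set d := coeff s Q with hd
  have hd0 : d ≠ 0 := mem_support_iff.mp hs
  set Q' : MvPolynomial (Fin 2) (AlgebraicClosure K) := C d⁻¹ * Q with hQ'def
  have hunit : IsUnit (C d⁻¹ : MvPolynomial (Fin 2) (AlgebraicClosure K)) :=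
    IsUnit.map _ (isUnit_iff_ne_zero.mpr (inv_ne_zero hd0))
  have hQQ' : Associated Q Q' := by
    refine ⟨hunit.unit, ?_⟩
    rw [hunit.unit_spec, hQ'def, mul_comm]
  have hQ'irr : Irreducible Q' := hQQ'.irreducible hQirr
  have hQ'0 : Q' ≠ 0 := hQ'irr.ne_zero
  have hQ'dvd : Q' ∣ map f P := hQQ'.symm.dvd.trans hQdvd
  have hcoeffs : coeff s Q' = 1 := by
    rw [hQ'def, coeff_C_mul, ← hd, inv_mul_cancel₀ hd0]
  have hFrQ'assoc : Associated (map (e : AlgebraicClosure K →+* AlgebraicClosure K) Q') Q' := by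
    have h1 : Associated (map (e : AlgebraicClosure K →+* AlgebraicClosure K) Q')
        (map (e : AlgebraicClosure K →+* AlgebraicClosure K) Q) :=
      (hQQ'.symm).map (MvPolynomial.map (e : AlgebraicClosure K →+* AlgebraicClosure K))
    exact h1.trans (hclaim.trans hQQ')
  obtain ⟨u, hu⟩ := hFrQ'assoc
  obtain ⟨c, hc0, hc⟩ := TCAux.exists_C_of_isUnit u.isUnit
  have hcoefffr : coeff s (map (e : AlgebraicClosure K →+* AlgebraicClosure K) Q') = 1 := by
    rw [coeff_map, hcoeffs, map_one]
  have hc1 : c = 1 := by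
    have h2 := congrArg (coeff s) hu
    rw [hcoeffs, hc, mul_comm, coeff_C_mul, hcoefffr, mul_one] at h2
    exact h2
  have hFrQ' : map (e : AlgebraicClosure K →+* AlgebraicClosure K) Q' = Q' := by
    conv_rhs => rw [← hu, hc, hc1, C_1, mul_one]
  have hrange : ∀ m, coeff m Q' ∈ Set.range f := by
    intro m
    apply TCAux.mem_range_of_pow_card_eq f
    have h2 := congrArg (coeff m) hFrQ'
    rw [coeff_map] at h2
    rw [← he]
    exact h2
  obtain ⟨Q₀, hQ₀⟩ := TCAux.exists_preimage_of_coeffs f Q' hrange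
  obtain ⟨B, hB⟩ := hQ'dvd
  have hFrB : map (e : AlgebraicClosure K →+* AlgebraicClosure K) B = B := by
    have h3 := hfixmap P
    rw [hB, map_mul, hFrQ'] at h3
    exact mul_left_cancel₀ hQ'0 h3
  have hrangeB : ∀ m, coeff m B ∈ Set.range f := by
    intro m
    apply TCAux.mem_range_of_pow_card_eq f
    have h2 := congrArg (coeff m) hFrB
    rw [coeff_map] at h2
    rw [← he]
    exact h2
  obtain ⟨B₀, hB₀⟩ := TCAux.exists_preimage_of_coeffs f B hrangeB
  have hPQB : P = Q₀ * B₀ := by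
    apply MvPolynomial.map_injective f hfinj
    rw [map_mul, hQ₀, hB₀, ← hB]
  rcases hPirr.isUnit_or_isUnit hPQB with hcase | hcase
  · exact absurd (hQ₀ ▸ IsUnit.map (MvPolynomial.map f) hcase) hQ'irr.not_isUnit
  · have hBunit : IsUnit B := hB₀ ▸ IsUnit.map (MvPolynomial.map f) hcase
    have hassocP : Associated Q' (map f P) := ⟨hBunit.unit, by rw [hBunit.unit_spec, ← hB]⟩
    exact hassocP.irreducible hQ'irr
end
end

section
/- Assume the Section 3 setup, and let u be the least nonnegative integer such that the tangent cone of F_{t-1} contains a monomial X^{2^u}Y^ℓ for some ℓ ≥ 0. Then for every r with 1 ≤ r ≤ t, the number 2^u divides n_r. -/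
open MvPolynomial

noncomputable section

namespace TwoPowAux

/-! ### Finsupp basics for `Fin 2` exponents -/

/-- The exponent finsupp of the monomial `X^a Y^b`. -/
def mn (a b : ℕ) : Fin 2 →₀ ℕ := Finsupp.single 0 a + Finsupp.single 1 b

@[simp] lemma mn_apply0 (a b : ℕ) : mn a b 0 = a := by simp [mn]
@[simp] lemma mn_apply1 (a b : ℕ) : mn a b 1 = b := by simp [mn]

lemma eq_mn (s : Fin 2 →₀ ℕ) : s = mn (s 0) (s 1) := by
  ext i; fin_cases i <;> simp

lemma mn_inj {a b a' b' : ℕ} (h : mn a b = mn a' b') : a = a' ∧ b = b' := by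
  constructor
  · simpa using congrArg (fun s : Fin 2 →₀ ℕ => s 0) h
  · simpa using congrArg (fun s : Fin 2 →₀ ℕ => s 1) h

lemma deg_eq (s : Fin 2 →₀ ℕ) : (s.sum fun _ e => e) = s 0 + s 1 := by
  rw [Finsupp.sum_fintype _ _ (fun _ => rfl)]
  simp [Fin.sum_univ_two]

@[simp] lemma deg_mn (a b : ℕ) : ((mn a b).sum fun _ e => e) = a + b := by
  rw [deg_eq]; simp

@[simp] lemma degree_mn (a b : ℕ) : (mn a b).degree = a + b := by
  have : (mn a b).degree = ((mn a b).sum fun _ e => e) := rfl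
  rw [this, deg_mn]

lemma mn_add_single1 (a b c : ℕ) : mn a b + Finsupp.single 1 c = mn a (b + c) := by
  simp [mn, Finsupp.single_add, add_assoc]

/-! ### Parity facts on binomial coefficients -/

lemma choose_step (m k : ℕ) :
    Nat.choose m k % 2 = (Nat.choose (m % 2) (k % 2) * Nat.choose (m / 2) (k / 2)) % 2 :=
  Choose.choose_modEq_choose_mod_mul_choose_div_nat (p := 2)

lemma pow_facts (v : ℕ) : 1 ≤ 2 ^ v ∧ 2 ^ (v+1) = 2 * 2 ^ v ∧ 2 ^ (v+2) = 4 * 2 ^ v := by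
  refine ⟨Nat.one_le_two_pow, ?_, ?_⟩ <;> ring

lemma choose_odd_of_lt : ∀ (v s k : ℕ), k < 2 ^ v →
    Nat.choose (2 ^ (v+1) * s + (2 ^ v - 1)) k % 2 = 1 := by
  intro v
  induction v with
  | zero =>
    intro s k hk
    interval_cases k
    simp
  | succ v ih =>
    intro s k hk
    obtain ⟨ha, hb, hc⟩ := pow_facts v
    have e1 : 2 ^ (v+2) * s = 2 * (2 ^ (v+1) * s) := by ring
    have e2 : 2 ^ (v+1) * s = 2 * (2 ^ v * s) := by ring
    set m := 2 ^ (v+2) * s + (2 ^ (v+1) - 1) with hm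
    have hm2 : m % 2 = 1 := by omega
    have hmd : m / 2 = 2 ^ (v+1) * s + (2 ^ v - 1) := by omega
    have hkd : k / 2 < 2 ^ v := by omega
    rw [choose_step, hm2, hmd]
    have h1 : Nat.choose 1 (k % 2) = 1 := by
      rcases Nat.mod_two_eq_zero_or_one k with h | h <;> rw [h] <;> simp
    rw [h1, one_mul]
    exact ih s (k / 2) hkd

lemma choose_even : ∀ (v s : ℕ),
    Nat.choose (2 ^ (v+1) * s + (2 ^ v - 1)) (2 ^ v) % 2 = 0 := by
  intro v
  induction v with
  | zero =>
    intro s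
    simp [Nat.choose_one_right, Nat.mul_mod_right]
  | succ v ih =>
    intro s
    obtain ⟨ha, hb, hc⟩ := pow_facts v
    have e1 : 2 ^ (v+2) * s = 2 * (2 ^ (v+1) * s) := by ring
    have e2 : 2 ^ (v+1) * s = 2 * (2 ^ v * s) := by ring
    set m := 2 ^ (v+2) * s + (2 ^ (v+1) - 1) with hm
    have hm2 : m % 2 = 1 := by omega
    have hmd : m / 2 = 2 ^ (v+1) * s + (2 ^ v - 1) := by omega
    have hk2 : 2 ^ (v+1) % 2 = 0 := by omega
    have hkd : 2 ^ (v+1) / 2 = 2 ^ v := by omega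
    rw [choose_step, hm2, hmd, hk2, hkd]
    simp [Nat.mul_mod, ih s]

lemma exists_rep (i : ℕ) (hi : 0 < i) (hnp : ∀ k : ℕ, i ≠ 2 ^ k) :
    ∃ v j : ℕ, 0 < j ∧ i = 2 ^ (v+1) * j + 2 ^ v := by
  set v := i.factorization 2 with hv
  have h1 : 2 ^ v * (i / 2 ^ v) = i := Nat.ordProj_mul_ordCompl_eq_self i 2
  have h2 : ¬ (2 ∣ i / 2 ^ v) := Nat.not_dvd_ordCompl Nat.prime_two hi.ne'
  obtain ⟨j, hj⟩ : ∃ j, i / 2 ^ v = 2 * j + 1 := by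
    rcases Nat.mod_two_eq_zero_or_one (i / 2 ^ v) with h | h
    · exact absurd (Nat.dvd_of_mod_eq_zero h) h2
    · exact ⟨i / 2 ^ v / 2, by omega⟩
  refine ⟨v, j, ?_, by rw [← h1, hj]; ring⟩
  rcases Nat.eq_zero_or_pos j with rfl | h
  · exfalso
    refine hnp v ?_
    rw [← h1, hj]; ring
  · exact h

/-! ### Coefficient computations -/

variable {K : Type*} [Field K]

lemma aeval_monomial_T (s : Fin 2 →₀ ℕ) (c : K) :
    aeval ![X 0 * X 1, X 1] (monomial s c) =
      monomial (mn (s 0) (s 0 + s 1)) c := by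
  rw [aeval_monomial, Finsupp.prod_fintype _ _ (fun i => pow_zero _), Fin.prod_univ_two]
  simp only [Matrix.cons_val_zero, Matrix.cons_val_one, Matrix.head_cons]
  rw [mul_pow, X_pow_eq_monomial, X_pow_eq_monomial, X_pow_eq_monomial,
    monomial_mul, monomial_mul, algebraMap_eq, C_mul_monomial]
  rw [mul_one, one_mul, mul_one]
  congr 1
  simp [mn, Finsupp.single_add, add_assoc]

lemma coeff_T (P : MvPolynomial (Fin 2) K) (a c : ℕ) :
    coeff (mn a c) (aeval ![X 0 * X 1, X 1] P) =
      if a ≤ c then coeff (mn a (c - a)) P else 0 := by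
  classical
  have key : ∀ s : Fin 2 →₀ ℕ, (mn (s 0) (s 0 + s 1) = mn a c) ↔
      (a ≤ c ∧ s = mn a (c - a)) := by
    intro s
    constructor
    · intro h
      obtain ⟨h1, h2⟩ := mn_inj h
      refine ⟨by omega, ?_⟩
      rw [eq_mn s, h1]
      congr 1
      omega
    · rintro ⟨hac, rfl⟩
      simp only [mn_apply0, mn_apply1]
      congr 1
      omega
  conv_lhs => rw [P.as_sum, map_sum]
  rw [coeff_sum]
  simp_rw [aeval_monomial_T, coeff_monomial, key]
  by_cases hac : a ≤ c
  · simp only [hac, true_and]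
    rw [Finset.sum_ite_eq' P.support (mn a (c - a)) (fun s => coeff s P)]
    split_ifs with h
    · rfl
    · exact (notMem_support_iff.mp h).symm
  · simp [hac]

lemma coeff_mul_X1_pow (P : MvPolynomial (Fin 2) K) (n a b : ℕ) :
    coeff (mn a (b + n)) (P * X 1 ^ n) = coeff (mn a b) P := by
  rw [X_pow_eq_monomial, ← mn_add_single1]
  rw [coeff_mul_monomial, mul_one]

lemma support_step (P Q : MvPolynomial (Fin 2) K) (n : ℕ)
    (h : Q * X 1 ^ n = aeval ![X 0 * X 1, X 1] P) (a b : ℕ) :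
    mn a b ∈ Q.support ↔ ∃ c, mn a c ∈ P.support ∧ a + c = b + n := by
  rw [mem_support_iff]
  have h1 : coeff (mn a b) Q = coeff (mn a (b + n)) (aeval ![X 0 * X 1, X 1] P) := by
    rw [← h, coeff_mul_X1_pow]
  rw [h1, coeff_T]
  constructor
  · intro hne
    by_cases hac : a ≤ b + n
    · exact ⟨b + n - a, mem_support_iff.mpr (by rwa [if_pos hac] at hne), by omega⟩
    · rw [if_neg hac] at hne; exact absurd rfl hne
  · rintro ⟨c, hc, hsum⟩
    have hac : a ≤ b + n := by omega
    rw [if_pos hac]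
    have he : b + n - a = c := by omega
    rw [he]
    exact mem_support_iff.mp hc

lemma coeff_zero_of_X_dvd (P : MvPolynomial (Fin 2) K)
    (h : (X 0 : MvPolynomial (Fin 2) K) ∣ P) (ℓ : ℕ) : coeff (mn 0 ℓ) P = 0 := by
  classical
  obtain ⟨Q, rfl⟩ := h
  rw [coeff_X_mul']
  rw [if_neg]
  simp [Finsupp.mem_support_iff]

lemma coeff_term (α : K) (m : ℕ) (β : ℕ → K) (i a c : ℕ) :
    coeff (mn a c) (C α * X 1 ^ m * ∑ k ∈ Finset.range i, C (β k) * X 0 ^ k) =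
      if a < i ∧ c = m then α * β a else 0 := by
  classical
  rw [Finset.mul_sum, coeff_sum]
  have hterm : ∀ k : ℕ, C α * X 1 ^ m * (C (β k) * X 0 ^ k) =
      monomial (mn k m) (α * β k) := by
    intro k
    rw [C_mul_X_pow_eq_monomial, C_mul_X_pow_eq_monomial, monomial_mul]
    congr 1
    simp [mn, add_comm]
  simp_rw [hterm, coeff_monomial]
  have key : ∀ k : ℕ, (mn k m = mn a c) ↔ (k = a ∧ c = m) := by
    intro k
    constructor
    · intro h; obtain ⟨h1, h2⟩ := mn_inj h; exact ⟨h1, h2.symm⟩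
    · rintro ⟨rfl, rfl⟩; rfl
  simp_rw [key]
  by_cases hcm : c = m
  · simp only [hcm, and_true]
    rw [Finset.sum_ite_eq' (Finset.range i) a (fun k => α * β k)]
    simp [Finset.mem_range]
  · simp [hcm]

lemma coeff_F0 (d : ℕ) (A : ℕ → K) (a c : ℕ) (ha : 0 < a) :
    coeff (mn a c) ((X 1 : MvPolynomial (Fin 2) K) ^ (d - 2) +
      ∑ i ∈ Finset.Icc 3 d, C (A i) * (X 1) ^ (d - i) *
        ∑ k ∈ Finset.range i, C ((((i - 1).choose k + 1 : ℕ) : K)) * (X 0) ^ k) =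
      ∑ i ∈ Finset.Icc 3 d,
        (if a < i ∧ c = d - i then A i * (((i - 1).choose a + 1 : ℕ) : K) else 0) := by
  classical
  rw [coeff_add, coeff_sum]
  have h1 : coeff (mn a c) ((X 1 : MvPolynomial (Fin 2) K) ^ (d - 2)) = 0 := by
    rw [X_pow_eq_monomial, coeff_monomial]
    rw [if_neg]
    intro h
    have h0 := congrArg (fun s : Fin 2 →₀ ℕ => s 0) h
    simp at h0
    omega
  rw [h1, zero_add]
  exact Finset.sum_congr rfl fun i _ => coeff_term (A i) (d - i) _ i a c

lemma mem_S_iff (d : ℕ) (A : ℕ → K) (a c : ℕ) (ha : 0 < a) :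
    mn a c ∈ ((X 1 : MvPolynomial (Fin 2) K) ^ (d - 2) +
      ∑ i ∈ Finset.Icc 3 d, C (A i) * (X 1) ^ (d - i) *
        ∑ k ∈ Finset.range i, C ((((i - 1).choose k + 1 : ℕ) : K)) * (X 0) ^ k).support ↔
      ∃ i, 3 ≤ i ∧ i ≤ d ∧ a < i ∧ c = d - i ∧
        A i * (((i - 1).choose a + 1 : ℕ) : K) ≠ 0 := by
  classical
  rw [mem_support_iff, coeff_F0 d A a c ha]
  constructor
  · intro hne
    obtain ⟨i, hi, hterm⟩ := Finset.exists_ne_zero_of_sum_ne_zero hne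
    rw [Finset.mem_Icc] at hi
    by_cases hcond : a < i ∧ c = d - i
    · exact ⟨i, hi.1, hi.2, hcond.1, hcond.2, by rwa [if_pos hcond] at hterm⟩
    · rw [if_neg hcond] at hterm; exact absurd rfl hterm
  · rintro ⟨i, h3, hd, hai, rfl, hne⟩
    rw [Finset.sum_eq_single i]
    · rwa [if_pos ⟨hai, rfl⟩]
    · intro j hj hji
      rw [Finset.mem_Icc] at hj
      rw [if_neg]
      rintro ⟨-, hdj⟩
      exact hji (by omega)
    · intro hmem
      exact absurd (Finset.mem_Icc.mpr ⟨h3, hd⟩) hmem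

end TwoPowAux

open TwoPowAux

theorem two_pow_u_divides_nseq
    {K : Type*} [Field K] [Fintype K] (n : ℕ) (hn : 1 ≤ n)
    (hcard : Fintype.card K = 2 ^ n)
    (f : Polynomial K) (d : ℕ) (hd : f.natDegree = d) (hd3 : 3 ≤ d)
    (hAd : f.coeff d ≠ 0)
    (hdeg : d ^ 4 ≤ Fintype.card K)
    (h2pow : ∀ i k : ℕ, i = 2 ^ k → f.coeff i = 0)
    (hplanar : ∀ ε : K, ε ≠ 0 →
      Function.Bijective fun x : K => f.eval (x + ε) + f.eval x + ε * x)
    (F : ℕ → MvPolynomial (Fin 2) K) (nseq : ℕ → ℕ)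
    (hF0 : F 0 = (X 1 : MvPolynomial (Fin 2) K) ^ (d - 2) +
      ∑ i ∈ Finset.Icc 3 d, C (f.coeff i) * (X 1) ^ (d - i) *
        ∑ k ∈ Finset.range i, C ((((i - 1).choose k + 1 : ℕ) : K)) * (X 0) ^ k)
    (hnseq : ∀ r : ℕ, 1 ≤ r →
      IsLeast {m : ℕ | ∃ s ∈ (F (r - 1)).support, (s.sum fun _ e => e) = m} (nseq r))
    (hFr : ∀ r : ℕ, 1 ≤ r →
      F r * (X 1 : MvPolynomial (Fin 2) K) ^ (nseq r) = aeval ![X 0 * X 1, X 1] (F (r - 1)))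
    (t : ℕ) (ht1 : 1 ≤ t)
    (ht : ¬ (X 0 : MvPolynomial (Fin 2) K) ∣ tangentCone (F t))
    (htleast : ∀ s : ℕ, s < t → (X 0 : MvPolynomial (Fin 2) K) ∣ tangentCone (F s))
    (u : ℕ)
    (hu : IsLeast {u' : ℕ | ∃ ℓ : ℕ,
      (tangentCone (F (t - 1))).coeff
        (Finsupp.single (0 : Fin 2) (2 ^ u') + Finsupp.single (1 : Fin 2) ℓ) ≠ 0} u)
    :
    ∀ r : ℕ, 1 ≤ r → r ≤ t → 2 ^ u ∣ nseq r := by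
  classical
  -- characteristic 2
  have hchar : CharP K 2 := by
    have hcp : CharP K (ringChar K) := ringChar.charP K
    have hprime : (ringChar K).Prime := CharP.char_is_prime K (ringChar K)
    obtain ⟨m, -, hm⟩ := FiniteField.card K (ringChar K)
    have hdvd : ringChar K ∣ 2 ^ n := by
      rw [← hcard, hm]
      exact dvd_pow_self _ m.pos.ne'
    have h2 : ringChar K = 2 :=
      (Nat.prime_dvd_prime_iff_eq hprime Nat.prime_two).mp (hprime.dvd_of_dvd_pow hdvd)
    rwa [h2] at hcp
  -- cleaned membership characterization of the support of F 0
  set S := (F 0).support with hS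
  have hmemS : ∀ a c : ℕ, 0 < a → (mn a c ∈ S ↔ ∃ i, 3 ≤ i ∧ i ≤ d ∧ a < i ∧ c = d - i ∧
      f.coeff i ≠ 0 ∧ (i - 1).choose a % 2 = 0) := by
    intro a c ha
    rw [hS, hF0, mem_S_iff d f.coeff a c ha]
    have hcast : ∀ i : ℕ, (f.coeff i * (((i - 1).choose a + 1 : ℕ) : K) ≠ 0) ↔
        (f.coeff i ≠ 0 ∧ (i - 1).choose a % 2 = 0) := by
      intro i
      rw [mul_ne_zero_iff]
      have : ((((i - 1).choose a + 1 : ℕ) : K) ≠ 0) ↔ (i - 1).choose a % 2 = 0 := by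
        rw [Ne, CharP.cast_eq_zero_iff K 2]
        omega
      rw [this]
    constructor
    · rintro ⟨i, h1, h2, h3, h4, h5⟩
      exact ⟨i, h1, h2, h3, h4, ((hcast i).mp h5).1, ((hcast i).mp h5).2⟩
    · rintro ⟨i, h1, h2, h3, h4, h5, h6⟩
      exact ⟨i, h1, h2, h3, h4, (hcast i).mpr ⟨h5, h6⟩⟩
  -- row structure of the support
  have hrow : ∀ a c : ℕ, 0 < a → mn a c ∈ S →
      ∃ z j : ℕ, 0 < j ∧ mn (2 ^ z) c ∈ S ∧
        (∀ a', 0 < a' → mn a' c ∈ S → 2 ^ z ≤ a') ∧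
        d = c + 2 ^ z + 2 ^ (z+1) * j := by
    intro a c ha hmem
    obtain ⟨i, h3, hid, hai, hc, hAi, hch⟩ := (hmemS a c ha).mp hmem
    have hnp : ∀ k : ℕ, i ≠ 2 ^ k := fun k hk => hAi (h2pow i k hk)
    obtain ⟨z, j, hj, hrep⟩ := exists_rep i (by omega) hnp
    obtain ⟨hz1, hz2, -⟩ := pow_facts z
    have hq : 2 ^ (z+1) ≤ 2 ^ (z+1) * j := Nat.le_mul_of_pos_right _ hj
    have hzlt : 2 ^ z < i := by omega
    have hi1 : i - 1 = 2 ^ (z+1) * j + (2 ^ z - 1) := by omega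
    have hchz : (i - 1).choose (2 ^ z) % 2 = 0 := by rw [hi1]; exact choose_even z j
    have hmem2 : mn (2 ^ z) c ∈ S :=
      (hmemS (2 ^ z) c (by omega)).mpr ⟨i, h3, hid, hzlt, hc, hAi, hchz⟩
    have hmin : ∀ a', 0 < a' → mn a' c ∈ S → 2 ^ z ≤ a' := by
      intro a' ha' hmem'
      obtain ⟨i', h3', hid', hai', hc', hAi', hch'⟩ := (hmemS a' c ha').mp hmem'
      have hii : i' = i := by omega
      subst hii
      by_contra hlt
      rw [hi1] at hch'
      have := choose_odd_of_lt z j a' (by omega)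
      omega
    exact ⟨z, j, hj, hmem2, hmin, by omega⟩
  -- partial sums of nseq
  set M : ℕ → ℕ := fun r => ∑ j ∈ Finset.Icc 1 r, nseq j with hMdef
  have hM0 : M 0 = 0 := by simp [hMdef]
  have hMsucc : ∀ r : ℕ, M (r+1) = M r + nseq (r+1) := by
    intro r
    simp only [hMdef]
    exact Finset.sum_Icc_succ_top (by omega) _
  -- the main support/minimality induction
  have main : ∀ r : ℕ,
      (∀ a b : ℕ, (mn a b ∈ (F r).support ↔ ∃ c, mn a c ∈ S ∧ r * a + c = b + M r)) ∧
      (∀ a c : ℕ, mn a c ∈ S → M r ≤ r * a + c) := by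
    intro r
    induction r with
    | zero =>
      constructor
      · intro a b
        constructor
        · intro h; exact ⟨b, h, by simp [hM0]⟩
        · rintro ⟨c, hc, he⟩
          have : c = b := by simp [hM0] at he; omega
          rwa [← this]
      · intro a c _
        simp [hM0]
    | succ r ih =>
      obtain ⟨ihsupp, ihmin⟩ := ih
      have hls := hnseq (r+1) (by omega)
      simp only [Nat.add_sub_cancel] at hls
      have hFr' := hFr (r+1) (by omega)
      simp only [Nat.add_sub_cancel] at hFr'
      have hstep := support_step (F r) (F (r+1)) (nseq (r+1)) hFr'
      have hra : ∀ a : ℕ, (r+1) * a = r * a + a := fun a => by ring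
      constructor
      · intro a b
        rw [hstep a b]
        constructor
        · rintro ⟨c', hc', he⟩
          obtain ⟨c, hc, he2⟩ := (ihsupp a c').mp hc'
          refine ⟨c, hc, ?_⟩
          rw [hMsucc, hra]
          omega
        · rintro ⟨c, hc, he⟩
          have hlb := ihmin a c hc
          rw [hMsucc, hra] at he
          refine ⟨r * a + c - M r, (ihsupp a _).mpr ⟨c, hc, by omega⟩, by omega⟩
      · intro a c hc
        have hlb := ihmin a c hc
        have hb' : mn a (r * a + c - M r) ∈ (F r).support :=
          (ihsupp a _).mpr ⟨c, hc, by omega⟩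
        have hdeg2 : nseq (r+1) ≤ a + (r * a + c - M r) :=
          hls.2 ⟨mn a (r * a + c - M r), hb', deg_mn _ _⟩
        rw [hMsucc, hra]
        omega
  -- achievers of the minimum
  have hach : ∀ r : ℕ, ∃ a c : ℕ, mn a c ∈ S ∧ (r+1) * a + c = M (r+1) := by
    intro r
    have hls := hnseq (r+1) (by omega)
    simp only [Nat.add_sub_cancel] at hls
    obtain ⟨s, hs, hdeg2⟩ := hls.1
    obtain ⟨c, hc, he⟩ := ((main r).1 (s 0) (s 1)).mp (by rwa [← eq_mn s] )
    refine ⟨s 0, c, hc, ?_⟩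
    rw [deg_eq] at hdeg2
    have hra : (r+1) * s 0 = r * s 0 + s 0 := by ring
    rw [hMsucc, hra]
    omega
  -- tangent cone coefficient characterization
  have hTC : ∀ r a ℓ : ℕ, (coeff (mn a ℓ) (tangentCone (F r)) ≠ 0) ↔
      (a + ℓ = nseq (r+1) ∧ ∃ c, mn a c ∈ S ∧ (r+1) * a + c = M (r+1)) := by
    intro r a ℓ
    have hls := hnseq (r+1) (by omega)
    simp only [Nat.add_sub_cancel] at hls
    have hmin : minMonomialDeg (F r) = nseq (r+1) := hls.csInf_eq
    unfold tangentCone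
    rw [hmin, coeff_homogeneousComponent, degree_mn]
    have hra : (r+1) * a = r * a + a := by ring
    split_ifs with h
    · constructor
      · intro hne
        obtain ⟨c, hc, he⟩ := ((main r).1 a ℓ).mp (mem_support_iff.mpr hne)
        refine ⟨h, c, hc, ?_⟩
        rw [hMsucc, hra]
        omega
      · rintro ⟨-, c, hc, he⟩
        rw [hMsucc, hra] at he
        exact mem_support_iff.mp (((main r).1 a ℓ).mpr ⟨c, hc, by omega⟩)
    · constructor
      · intro h0; exact absurd rfl h0
      · rintro ⟨h1, -⟩; exact absurd h1 h
  -- decompose t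
  obtain ⟨t', rfl⟩ : ∃ t', t = t' + 1 := ⟨t - 1, by omega⟩
  simp only [Nat.add_sub_cancel] at hu
  -- there is an argmin point with a = 2^u at level t'+1
  obtain ⟨ℓu, hℓu⟩ := hu.1
  have hu1 : 2 ^ u + ℓu = nseq (t'+1) ∧
      ∃ c, mn (2 ^ u) c ∈ S ∧ (t'+1) * 2 ^ u + c = M (t'+1) := by
    apply (hTC t' (2 ^ u) ℓu).mp
    have : coeff (mn (2 ^ u) ℓu) (tangentCone (F t')) =
        (tangentCone (F t')).coeff
          (Finsupp.single (0 : Fin 2) (2 ^ u) + Finsupp.single (1 : Fin 2) ℓu) := rfl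
    rw [this]
    exact hℓu
  -- nseq is antitone on [1, ∞)
  have hmono : ∀ r : ℕ, 1 ≤ r → nseq (r+1) ≤ nseq r := by
    intro r hr
    obtain ⟨w, rfl⟩ : ∃ w, r = w + 1 := ⟨r - 1, by omega⟩
    obtain ⟨a, c, hc, he⟩ := hach w
    have h1 := (main (w+1+1)).2 a c hc
    have h2 := (main w).2 a c hc
    have e1 : (w+1+1) * a = (w+1) * a + a := by ring
    have e2 : (w+1) * a = w * a + a := by ring
    have h3 := hMsucc (w+1)
    have h4 := hMsucc w
    omega
  have hchain : ∀ s r : ℕ, 1 ≤ r → r ≤ s → nseq s ≤ nseq r := by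
    intro s
    induction s with
    | zero => intro r h1 h2; omega
    | succ s ih =>
      intro r h1 h2
      rcases Nat.eq_or_lt_of_le h2 with h | h
      · exact le_of_eq (by rw [h])
      · exact le_trans (hmono s (by omega)) (ih r h1 (by omega))
  -- 2^u ≤ nseq r for all 1 ≤ r ≤ t'+1
  have hnl : ∀ r, 1 ≤ r → r ≤ t'+1 → 2 ^ u ≤ nseq r := by
    intro r h1 h2
    have h3 : 2 ^ u ≤ nseq (t'+1) := by omega
    exact le_trans h3 (hchain (t'+1) r h1 h2)
  -- all mins are congruent to d mod 2^u
  have hMr : ∀ r, 1 ≤ r → r ≤ t'+1 → M r ≡ d [MOD 2 ^ u] := by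
    intro r h1 h2
    obtain ⟨w, rfl⟩ : ∃ w, r = w + 1 := ⟨r - 1, by omega⟩
    obtain ⟨a, c, hc, he⟩ := hach w
    have ha : 0 < a := by
      rcases Nat.eq_zero_or_pos a with rfl | h
      · exfalso
        have hdvd := htleast w (by omega)
        have hco : coeff (mn 0 (nseq (w+1))) (tangentCone (F w)) ≠ 0 := by
          refine (hTC w 0 (nseq (w+1))).mpr ⟨by omega, c, hc, ?_⟩
          simpa using he
        exact hco (coeff_zero_of_X_dvd _ hdvd _)
      · exact h
    obtain ⟨z, j, hj, hmem2, hmin2, hdc⟩ := hrow a c ha hc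
    have hza : a = 2 ^ z := by
      have hlb := (main (w+1)).2 (2 ^ z) c hmem2
      have hle := hmin2 a ha hc
      have hmul : (w+1) * 2 ^ z ≤ (w+1) * a := Nat.mul_le_mul_left _ hle
      have heq : (w+1) * 2 ^ z = (w+1) * a := by omega
      have := Nat.eq_of_mul_eq_mul_left (by omega : 0 < w+1) heq
      omega
    have hzu : u ≤ z := by
      rcases Nat.lt_or_ge w t' with hw | hw
      · -- w + 1 ≤ t' : use the antitone chain
        have h2z : 2 ^ u ≤ 2 ^ z := by
          have ha2 : nseq (w+1+1) ≤ a := by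
            have h1' := (main (w+1+1)).2 a c hc
            have e1 : (w+1+1) * a = (w+1) * a + a := by ring
            have h3 := hMsucc (w+1)
            omega
          have h4 := hnl (w+1+1) (by omega) (by omega)
          omega
        exact (Nat.pow_le_pow_iff_right (by omega)).mp h2z
      · -- w = t' : use minimality of u
        have hw' : w = t' := by omega
        subst hw'
        apply hu.2
        have haz : 2 ^ z ≤ nseq (w+1) := by
          have hlb := (main w).2 a c hc
          have e2 : (w+1) * a = w * a + a := by ring
          have h4 := hMsucc w
          omega
        refine ⟨nseq (w+1) - 2 ^ z, ?_⟩
        have hco : coeff (mn (2 ^ z) (nseq (w+1) - 2 ^ z)) (tangentCone (F w)) ≠ 0 := by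
          refine (hTC w (2 ^ z) _).mpr ⟨by omega, c, ?_, ?_⟩
          · rwa [hza] at hc
          · rwa [hza] at he
        exact hco
    subst hza
    have hdz : (2 ^ u : ℕ) ∣ (w+1) * 2 ^ z := Dvd.dvd.mul_left (pow_dvd_pow 2 hzu) _
    have hdz2 : (2 ^ u : ℕ) ∣ 2 ^ z + 2 ^ (z+1) * j :=
      Nat.dvd_add (pow_dvd_pow 2 hzu) (Dvd.dvd.mul_right (pow_dvd_pow 2 (by omega)) _)
    rw [← he, hdc]
    have h5 : (w+1) * 2 ^ z + c ≡ c [MOD 2 ^ u] := by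
      simpa using (Nat.modEq_zero_iff_dvd.mpr hdz).add_right c
    have h6 : c + 2 ^ z + 2 ^ (z+1) * j ≡ c [MOD 2 ^ u] := by
      have h7 := (Nat.modEq_zero_iff_dvd.mpr hdz2).add_left c
      simpa [add_assoc] using h7
    exact h5.trans h6.symm
  -- 2^u divides d
  have hd_dvd : (2 ^ u : ℕ) ∣ d := by
    have hnp : ∀ k : ℕ, d ≠ 2 ^ k := fun k hk => hAd (h2pow d k hk)
    obtain ⟨z0, j0, hj0, hrep0⟩ := exists_rep d (by omega) hnp
    obtain ⟨hz1, hz2, -⟩ := pow_facts z0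
    have hq : 2 ^ (z0+1) ≤ 2 ^ (z0+1) * j0 := Nat.le_mul_of_pos_right _ hj0
    have hzlt : 2 ^ z0 < d := by omega
    have hch0 : (d - 1).choose (2 ^ z0) % 2 = 0 := by
      have hi1 : d - 1 = 2 ^ (z0+1) * j0 + (2 ^ z0 - 1) := by omega
      rw [hi1]; exact choose_even z0 j0
    have hmem0 : mn (2 ^ z0) 0 ∈ S :=
      (hmemS _ _ (by omega)).mpr ⟨d, hd3, le_refl d, hzlt, by omega, hAd, hch0⟩
    have hub := (main (t'+1)).2 (2 ^ z0) 0 hmem0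
    have hlbM : (t'+1) * 2 ^ u ≤ M (t'+1) := by
      have hle : ∀ r ∈ Finset.Icc 1 (t'+1), 2 ^ u ≤ nseq r := by
        intro r hr; rw [Finset.mem_Icc] at hr; exact hnl r hr.1 hr.2
      have hsum := Finset.sum_le_sum hle
      have hcardI : (Finset.Icc 1 (t'+1)).card = t'+1 := by rw [Nat.card_Icc]; omega
      rw [Finset.sum_const, hcardI, smul_eq_mul] at hsum
      exact hsum
    have hmul2 : (t'+1) * 2 ^ u ≤ (t'+1) * 2 ^ z0 := by omega
    have h2z : 2 ^ u ≤ 2 ^ z0 := Nat.le_of_mul_le_mul_left hmul2 (by omega)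
    have hzu : u ≤ z0 := (Nat.pow_le_pow_iff_right (by omega)).mp h2z
    exact dvd_trans (pow_dvd_pow 2 hzu) ⟨2 * j0 + 1, by rw [hrep0]; ring⟩
  -- conclusion
  intro r h1 h2
  have hd0 : d ≡ 0 [MOD 2 ^ u] := Nat.modEq_zero_iff_dvd.mpr hd_dvd
  rcases Nat.eq_or_lt_of_le h1 with h | h
  · -- r = 1
    have hm1 : M 1 = nseq 1 := by
      have h01 := hMsucc 0
      rw [hM0] at h01
      simpa using h01
    have hmr := hMr 1 (le_refl 1) (by omega)
    rw [hm1] at hmr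
    rw [← h]
    exact Nat.modEq_zero_iff_dvd.mp (hmr.trans hd0)
  · -- r ≥ 2
    obtain ⟨w, rfl⟩ : ∃ w, r = w + 1 + 1 := ⟨r - 2, by omega⟩
    have hA := hMr (w+1) (by omega) (by omega)
    have hB := hMr (w+1+1) (by omega) (by omega)
    have hMe := hMsucc (w+1)
    have h5 : d + nseq (w+1+1) ≡ d + 0 [MOD 2 ^ u] := by
      calc d + nseq (w+1+1) ≡ M (w+1) + nseq (w+1+1) [MOD 2 ^ u] := hA.symm.add_right _
        _ = M (w+1+1) := hMe.symm
        _ ≡ d [MOD 2 ^ u] := hB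
        _ = d + 0 := by rw [add_zero]
    exact Nat.modEq_zero_iff_dvd.mp (Nat.ModEq.add_left_cancel' d h5)
end
end

section
/- Let q be a power of 2 and f ∈ F_q[X]. Then f is planar on F_q if and only if for all x, y, z ∈ F_q with x ≠ y and x ≠ z one has f(x) + f(y) + f(z) + f(x+y+z) ≠ (x+y)(x+z). -/
theorem planar_iff_surface_condition
    {K : Type*} [Field K] [Fintype K] (n : ℕ) (hn : 1 ≤ n)
    (hcard : Fintype.card K = 2 ^ n)
    (f : Polynomial K) :
    (∀ ε : K, ε ≠ 0 →
      Function.Bijective fun x : K => f.eval (x + ε) + f.eval x + ε * x) ↔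
    ∀ x y z : K, x ≠ y → x ≠ z →
      f.eval x + f.eval y + f.eval z + f.eval (x + y + z) ≠ (x + y) * (x + z) := by
  have h2 : (2 : K) = 0 := by
    have hc : ((Fintype.card K : ℕ) : K) = 0 := FiniteField.cast_card_eq_zero K
    rw [hcard] at hc
    push_cast at hc
    exact pow_eq_zero_iff (by omega) |>.mp hc
  constructor
  · intro hpl x y z hxy hxz heq
    have hε : x + y ≠ 0 := fun h => hxy (by linear_combination h - y * h2)
    apply hxz
    apply (hpl (x + y) hε).injective
    show f.eval (x + (x + y)) + f.eval x + (x + y) * x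
        = f.eval (z + (x + y)) + f.eval z + (x + y) * z
    have e1 : x + (x + y) = y := by linear_combination x * h2
    have e2 : z + (x + y) = x + y + z := by ring
    rw [e1, e2]
    linear_combination heq + (x * (x + y) - f.eval z - f.eval (x + y + z)) * h2
  · intro h ε hε
    rw [← Finite.injective_iff_bijective]
    intro a b hab
    by_contra hne
    have h1 : a ≠ a + ε := fun hh => hε (by linear_combination -hh)
    apply h a (a + ε) b h1 hne
    have e3 : a + (a + ε) + b = b + ε := by linear_combination a * h2
    rw [e3]
    simp only [] at hab
    linear_combination hab + (f.eval b + f.eval (b + ε) - a ^ 2 - a * b - ε * a) * h2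
end

section
/- Let q be a power of 2 and let f = Σ_{i=0}^d A_i X^i ∈ F_q[X] with A_d ≠ 0 and d ≥ 3. If f is planar on F_q, then every point (x,y) ∈ F_q × F_q with F(x,y) = 0 satisfies x = 1 or y = 0, where F is the associated polynomial. -/
open MvPolynomial

lemma char2_inner_key {K : Type*} [Field K] (h2 : (2:K) = 0) (x : K) {i : ℕ} (hi : 1 ≤ i) :
    (x + 1) * (∑ k ∈ Finset.range i, ((((i - 1).choose k + 1 : ℕ) : K)) * x ^ k)
      = (x + 1) ^ i + x ^ i + 1 := by
  have hbin : (x + 1) ^ (i - 1) = ∑ k ∈ Finset.range i, (((i-1).choose k : ℕ) : K) * x ^ k := by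
    rw [add_pow, show i - 1 + 1 = i from by omega]
    apply Finset.sum_congr rfl
    intro k hk
    simp [mul_comm]
  have hgeom : (∑ k ∈ Finset.range i, x ^ k) * (x + 1) = x ^ i + 1 := by
    have hg := geom_sum_mul x i
    calc (∑ k ∈ Finset.range i, x ^ k) * (x + 1)
        = (∑ k ∈ Finset.range i, x ^ k) * (x - 1) + (∑ k ∈ Finset.range i, x ^ k) * 2 := by ring
      _ = x ^ i + 1 := by rw [hg, h2]; linear_combination -h2
  have hsplit : (∑ k ∈ Finset.range i, ((((i - 1).choose k + 1 : ℕ) : K)) * x ^ k)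
      = (∑ k ∈ Finset.range i, (((i-1).choose k : ℕ) : K) * x ^ k)
        + ∑ k ∈ Finset.range i, x ^ k := by
    rw [← Finset.sum_add_distrib]
    apply Finset.sum_congr rfl
    intro k hk
    push_cast
    ring
  have hpow : (x + 1) * (x + 1) ^ (i - 1) = (x + 1) ^ i := by
    rw [← pow_succ']
    congr 1
    omega
  rw [hsplit, ← hbin]
  calc (x + 1) * ((x + 1) ^ (i - 1) + ∑ k ∈ Finset.range i, x ^ k)
      = (x + 1) * (x + 1) ^ (i - 1) + (∑ k ∈ Finset.range i, x ^ k) * (x + 1) := by ring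
    _ = (x + 1) ^ i + (x ^ i + 1) := by rw [hgeom, hpow]
    _ = (x + 1) ^ i + x ^ i + 1 := by ring

theorem planar_rational_points_of_F
    {K : Type*} [Field K] [Fintype K] (n : ℕ) (hn : 1 ≤ n)
    (hcard : Fintype.card K = 2 ^ n)
    (f : Polynomial K) (d : ℕ) (hd : f.natDegree = d) (hd3 : 3 ≤ d)
    (hAd : f.coeff d ≠ 0)
    (F : MvPolynomial (Fin 2) K)
    (hF : F = (X 1 : MvPolynomial (Fin 2) K) ^ (d - 2) +
      ∑ i ∈ Finset.Icc 3 d, C (f.coeff i) * (X 1) ^ (d - i) *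
        ∑ k ∈ Finset.range i, C ((((i - 1).choose k + 1 : ℕ) : K)) * (X 0) ^ k)
    (hplanar : ∀ ε : K, ε ≠ 0 →
      Function.Bijective fun x : K => f.eval (x + ε) + f.eval x + ε * x) :
    ∀ x y : K, eval ![x, y] F = 0 → x = 1 ∨ y = 0 := by
  -- characteristic 2
  have h2 : (2 : K) = 0 := by
    have hc : ((Fintype.card K : ℕ) : K) = 0 := FiniteField.cast_card_eq_zero K
    rw [hcard] at hc
    push_cast at hc
    exact pow_eq_zero_iff (by omega) |>.mp hc
  intro x y hxy
  by_contra hcon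
  push_neg at hcon
  obtain ⟨hx1, hy0⟩ := hcon
  have hx1' : x + 1 ≠ 0 := by
    intro h
    apply hx1
    linear_combination h - h2
  set ε : K := (x + 1) * y⁻¹ with hεdef
  set δ : K := y⁻¹ with hδdef
  have hε : ε ≠ 0 := mul_ne_zero hx1' (inv_ne_zero hy0)
  have hδ : δ ≠ 0 := inv_ne_zero hy0
  -- evaluate F
  have hFval : y ^ (d - 2) +
      ∑ i ∈ Finset.Icc 3 d, f.coeff i * y ^ (d - i) *
        ∑ k ∈ Finset.range i, ((((i - 1).choose k + 1 : ℕ) : K)) * x ^ k = 0 := by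
    rw [hF] at hxy
    simpa [eval_add, eval_pow, eval_mul, eval_C, eval_X, Matrix.cons_val_zero,
      Matrix.cons_val_one, Matrix.head_cons] using hxy
  have hsum : ∑ i ∈ Finset.Icc 3 d, f.coeff i * y ^ (d - i) *
      ∑ k ∈ Finset.range i, ((((i - 1).choose k + 1 : ℕ) : K)) * x ^ k = y ^ (d - 2) := by
    linear_combination hFval - (y ^ (d-2)) * h2
  -- multiply by (x+1)
  have hkey : ∑ i ∈ Finset.Icc 3 d, f.coeff i * y ^ (d - i) * ((x + 1) ^ i + x ^ i + 1)
      = (x + 1) * y ^ (d - 2) := by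
    rw [← hsum, Finset.mul_sum]
    apply Finset.sum_congr rfl
    intro i hi
    have hi1 : 1 ≤ i := by
      have := (Finset.mem_Icc.mp hi).1; omega
    rw [← char2_inner_key h2 x hi1]
    ring
  -- divide by y^d
  have hTi : ∀ i ∈ Finset.Icc 3 d,
      f.coeff i * ((ε + δ) ^ i + ε ^ i + δ ^ i)
        = f.coeff i * y ^ (d - i) * ((x + 1) ^ i + x ^ i + 1) * (y⁻¹) ^ d := by
    intro i hi
    obtain ⟨hi3, hid⟩ := Finset.mem_Icc.mp hi
    have hyd : y ^ (d - i) * (y⁻¹) ^ d = (y⁻¹) ^ i := by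
      rw [inv_pow, inv_pow]
      rw [mul_inv_eq_iff_eq_mul₀ (pow_ne_zero _ hy0), inv_mul_eq_div]
      rw [div_eq_mul_inv]
      exact pow_sub₀ y hy0 hid
    have hεδ : ε + δ = x * y⁻¹ := by
      rw [hεdef, hδdef]; ring_nf; linear_combination y⁻¹ * h2
    calc f.coeff i * ((ε + δ) ^ i + ε ^ i + δ ^ i)
        = f.coeff i * ((x * y⁻¹) ^ i + ((x+1) * y⁻¹) ^ i + (y⁻¹) ^ i) := by rw [hεδ]
      _ = f.coeff i * (((x + 1) ^ i + x ^ i + 1) * (y⁻¹) ^ i) := by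
          rw [mul_pow, mul_pow]; ring
      _ = f.coeff i * y ^ (d - i) * ((x + 1) ^ i + x ^ i + 1) * (y⁻¹) ^ d := by
          rw [← hyd]; ring
  have hT : ∑ i ∈ Finset.Icc 3 d, f.coeff i * ((ε + δ) ^ i + ε ^ i + δ ^ i) = ε * δ := by
    rw [Finset.sum_congr rfl hTi, ← Finset.sum_mul, hkey]
    have hy2 : y ^ (d - 2) * (y⁻¹) ^ d = (y⁻¹) ^ 2 := by
      rw [inv_pow, inv_pow]
      rw [mul_inv_eq_iff_eq_mul₀ (pow_ne_zero _ hy0), inv_mul_eq_div]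
      have h2d : 2 ≤ d := by omega
      rw [div_eq_mul_inv]
      exact pow_sub₀ y hy0 h2d
    calc (x + 1) * y ^ (d - 2) * (y⁻¹) ^ d = (x + 1) * (y ^ (d - 2) * (y⁻¹) ^ d) := by ring
      _ = (x + 1) * (y⁻¹) ^ 2 := by rw [hy2]
      _ = ε * δ := by rw [hεdef, hδdef]; ring
  -- the four-fold sum
  have heval : ∀ t : K, f.eval t = ∑ i ∈ Finset.range (d + 1), f.coeff i * t ^ i := by
    intro t
    rw [Polynomial.eval_eq_sum_range, hd]
  have hfs : f.eval (ε + δ) + f.eval ε + f.eval δ + f.eval 0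
      = ∑ i ∈ Finset.Icc 3 d, f.coeff i * ((ε + δ) ^ i + ε ^ i + δ ^ i) := by
    rw [heval, heval, heval, heval, ← Finset.sum_add_distrib, ← Finset.sum_add_distrib,
      ← Finset.sum_add_distrib]
    have hsplit : ∑ i ∈ Finset.range (d + 1),
        (f.coeff i * (ε + δ) ^ i + f.coeff i * ε ^ i + f.coeff i * δ ^ i
          + f.coeff i * (0:K) ^ i)
        = (∑ i ∈ Finset.range 3,
            (f.coeff i * (ε + δ) ^ i + f.coeff i * ε ^ i + f.coeff i * δ ^ i
              + f.coeff i * (0:K) ^ i))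
          + ∑ i ∈ Finset.Ico 3 (d + 1),
            (f.coeff i * (ε + δ) ^ i + f.coeff i * ε ^ i + f.coeff i * δ ^ i
              + f.coeff i * (0:K) ^ i) := by
      rw [Finset.range_eq_Ico, ← Finset.sum_Ico_consecutive _ (by omega : 0 ≤ 3)
        (by omega : 3 ≤ d + 1), Finset.range_eq_Ico]
    rw [hsplit]
    have h03 : (∑ i ∈ Finset.range 3,
        (f.coeff i * (ε + δ) ^ i + f.coeff i * ε ^ i + f.coeff i * δ ^ i
          + f.coeff i * (0:K) ^ i)) = 0 := by
      rw [Finset.sum_range_succ, Finset.sum_range_succ, Finset.sum_range_one]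
      simp only [pow_zero, pow_one, pow_two]
      linear_combination (2 * f.coeff 0 + f.coeff 1 * ε + f.coeff 1 * δ
        + f.coeff 2 * (ε * ε + δ * δ + ε * δ)) * h2
    rw [h03, zero_add, Finset.Ico_add_one_right_eq_Icc]
    apply Finset.sum_congr rfl
    intro i hi
    have hi3 : 3 ≤ i := (Finset.mem_Icc.mp hi).1
    rw [zero_pow (by omega : i ≠ 0)]
    ring
  have hmain : f.eval (ε + δ) + f.eval ε + f.eval δ + f.eval 0 = ε * δ := by
    rw [hfs, hT]
  -- contradict injectivity
  have hinj := (hplanar ε hε).injective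
  have : δ = 0 := by
    apply hinj
    show f.eval (δ + ε) + f.eval δ + ε * δ = f.eval (0 + ε) + f.eval 0 + ε * 0
    rw [add_comm δ ε, zero_add, mul_zero, add_zero]
    linear_combination hmain + (ε * δ - f.eval ε - f.eval 0) * h2
  exact hδ this
end

section
/- Let i ≥ 2 be a natural number that is not a power of two. Then the least natural number k ≥ 0 such that the binomial coefficient binom(i-1, k) is even equals 2^{v₂(i)}, where v₂(i) denotes the 2-adic valuation of i. -/
private lemma lucas_step (n k : ℕ) :
    n.choose k % 2 = ((n % 2).choose (k % 2) * (n / 2).choose (k / 2)) % 2 :=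
  Choose.choose_modEq_choose_mod_mul_choose_div_nat (p := 2)

private lemma lemA : ∀ t a k : ℕ, k < 2 ^ t → (2 ^ t * a + (2 ^ t - 1)).choose k % 2 = 1 := by
  intro t
  induction t with
  | zero =>
      intro a k hk
      interval_cases k
      simp
  | succ t ih =>
      intro a k hk
      have hP : 0 < 2 ^ t := Nat.pow_pos (by norm_num)
      have hn : 2 ^ (t + 1) * a + (2 ^ (t + 1) - 1)
          = 2 * (2 ^ t * a + (2 ^ t - 1)) + 1 := by
        have h2 : 2 ^ (t + 1) = 2 * 2 ^ t := by ring
        set P := 2 ^ t with hPdef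
        set Q := P * a with hQdef
        have : 2 ^ (t + 1) * a = 2 * Q := by rw [h2, hQdef]; ring
        omega
      rw [hn, lucas_step]
      have hm : (2 * (2 ^ t * a + (2 ^ t - 1)) + 1) % 2 = 1 := by omega
      have hd : (2 * (2 ^ t * a + (2 ^ t - 1)) + 1) / 2 = 2 ^ t * a + (2 ^ t - 1) := by omega
      rw [hm, hd]
      have hk1 : k % 2 ≤ 1 := by omega
      have hc1 : Nat.choose 1 (k % 2) = 1 := by interval_cases h : (k % 2) <;> simp
      have hk2 : k / 2 < 2 ^ t := by
        have : 2 ^ (t + 1) = 2 * 2 ^ t := by ring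
        omega
      rw [hc1, one_mul]
      exact ih a (k / 2) hk2

private lemma lemB : ∀ t b : ℕ, (2 ^ (t + 1) * b + (2 ^ t - 1)).choose (2 ^ t) % 2 = 0 := by
  intro t
  induction t with
  | zero =>
      intro b
      simp [Nat.choose_one_right, Nat.mul_mod_right]
  | succ t ih =>
      intro b
      have hP : 0 < 2 ^ t := Nat.pow_pos (by norm_num)
      have hn : 2 ^ (t + 2) * b + (2 ^ (t + 1) - 1)
          = 2 * (2 ^ (t + 1) * b + (2 ^ t - 1)) + 1 := by
        have h2 : 2 ^ (t + 2) = 2 * 2 ^ (t + 1) := by ring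
        have h3 : 2 ^ (t + 1) = 2 * 2 ^ t := by ring
        set P := 2 ^ t with hPdef
        set R := 2 ^ (t+1) with hRdef
        set Q := R * b with hQdef
        have : 2 ^ (t + 2) * b = 2 * Q := by rw [h2, hQdef]; ring
        omega
      rw [hn, lucas_step]
      have hm : (2 * (2 ^ (t + 1) * b + (2 ^ t - 1)) + 1) % 2 = 1 := by omega
      have hd : (2 * (2 ^ (t + 1) * b + (2 ^ t - 1)) + 1) / 2
          = 2 ^ (t + 1) * b + (2 ^ t - 1) := by omega
      have hke : 2 ^ (t + 1) % 2 = 0 := by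
        have : 2 ^ (t + 1) = 2 * 2 ^ t := by ring
        omega
      have hkd : 2 ^ (t + 1) / 2 = 2 ^ t := by
        have : 2 ^ (t + 1) = 2 * 2 ^ t := by ring
        omega
      rw [hm, hd, hke, hkd]
      simp only [Nat.choose_zero_right, one_mul]
      exact ih b

theorem least_even_binomial_eq_two_pow_val
    (i : ℕ) (hi : 2 ≤ i) (hnp : ∀ e : ℕ, i ≠ 2 ^ e) :
    IsLeast {k : ℕ | Even ((i - 1).choose k)} (2 ^ padicValNat 2 i) := by
  set t := padicValNat 2 i with ht
  have hi0 : i ≠ 0 := by omega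
  have hdvd : 2 ^ t ∣ i := pow_padicValNat_dvd
  obtain ⟨m, hm⟩ := hdvd
  have hmodd : ¬ 2 ∣ m := by
    intro ⟨c, hc⟩
    have : 2 ^ (t + 1) ∣ i := ⟨c, by rw [hm, hc]; ring⟩
    exact pow_succ_padicValNat_not_dvd hi0 this
  have hm1 : m ≠ 1 := by
    intro h
    exact hnp t (by rw [hm, h, mul_one])
  have hm0 : m ≠ 0 := by rintro rfl; simp at hm; exact hi0 hm
  obtain ⟨b, hb⟩ : ∃ b, m = 2 * b + 1 := ⟨m / 2, by omega⟩
  have hb1 : 1 ≤ b := by omega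
  have hP : 0 < 2 ^ t := Nat.pow_pos (by norm_num)
  have hi1 : i - 1 = 2 ^ (t + 1) * b + (2 ^ t - 1) := by
    have h2 : 2 ^ (t + 1) = 2 * 2 ^ t := by ring
    have : i = 2 ^ t * (2 * b) + 2 ^ t := by rw [hm, hb]; ring
    set P := 2 ^ t with hPdef
    set Q := P * b with hQdef
    have e1 : P * (2 * b) = 2 * Q := by rw [hQdef]; ring
    have e2 : 2 ^ (t + 1) * b = 2 * Q := by rw [h2, hQdef]; ring
    omega
  have hi2 : i - 1 = 2 ^ t * (2 * b) + (2 ^ t - 1) := by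
    have h2 : 2 ^ (t + 1) = 2 * 2 ^ t := by ring
    rw [hi1]
    set P := 2 ^ t
    ring_nf
    rfl
  constructor
  · show Even ((i - 1).choose (2 ^ t))
    rw [Nat.even_iff, hi1]
    exact lemB t b
  · intro k hk
    by_contra hlt
    push_neg at hlt
    have := lemA t (2 * b) k (by omega)
    rw [← hi2] at this
    rw [Set.mem_setOf_eq, Nat.even_iff] at hk
    omega
end

section
/- Let q be a power of 2 and let f = Σ_{i=0}^d A_i X^i ∈ F_q[X] with A_d ≠ 0, d ≥ 6, and d ≡ 2 (mod 4). Define F ∈ F_q[X,Y] by F(X,Y) = Σ_{i=3}^d A_i Y^{d-i} Σ_{k=1}^{i-1} (binom(i-1,k)+1) X^{k-1}. Then F(0,0) = 0 and the tangent cone of F at the origin equals A_d·X + A_{d-1}·Y; in particular, the homogeneous component of F of degree 0 vanishes and the homogeneous component of degree 1 is A_d·X + A_{d-1}·Y ≠ 0. -/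
open MvPolynomial

noncomputable section

theorem apn_curve_tangent_cone
    {K : Type*} [Field K] [Fintype K] (n : ℕ) (hn : 1 ≤ n)
    (hcard : Fintype.card K = 2 ^ n)
    (f : Polynomial K) (d : ℕ) (hd : f.natDegree = d) (hd6 : 6 ≤ d)
    (hAd : f.coeff d ≠ 0) (hdmod : d % 4 = 2)
    (F : MvPolynomial (Fin 2) K)
    (hF : F = ∑ i ∈ Finset.Icc 3 d, C (f.coeff i) * (X 1 : MvPolynomial (Fin 2) K) ^ (d - i) *
        ∑ k ∈ Finset.Icc 1 (i - 1), C ((((i - 1).choose k + 1 : ℕ) : K)) * (X 0) ^ (k - 1)) :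
    eval ![(0 : K), 0] F = 0 ∧
    homogeneousComponent 0 F = 0 ∧
    homogeneousComponent 1 F =
      C (f.coeff d) * (X 0 : MvPolynomial (Fin 2) K) + C (f.coeff (d - 1)) * X 1 ∧
    C (f.coeff d) * (X 0 : MvPolynomial (Fin 2) K) + C (f.coeff (d - 1)) * X 1 ≠ 0 ∧
    tangentCone F =
      C (f.coeff d) * (X 0 : MvPolynomial (Fin 2) K) + C (f.coeff (d - 1)) * X 1 := by
  -- characteristic 2
  have h2 : (2 : K) = 0 := by
    have hc := FiniteField.cast_card_eq_zero K
    rw [hcard] at hc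
    push_cast at hc
    exact pow_eq_zero_iff (by omega) |>.mp hc
  obtain ⟨t, ht⟩ : ∃ t, d = 4 * t + 2 := ⟨d / 4, by omega⟩
  have hdK : ((d : ℕ) : K) = 0 := by
    have : ((d : ℕ) : K) = 2 * (2 * (t : K) + 1) := by rw [ht]; push_cast; ring
    rw [this, h2, zero_mul]
  have hd1K : ((d - 1 : ℕ) : K) = 1 := by
    have e : d - 1 = 2 * (2 * t) + 1 := by omega
    rw [e]; push_cast [h2]; ring
  have hchK : (((d - 1).choose 2 : ℕ) : K) = 0 := by
    have e : (d - 1).choose 2 = (4 * t + 1) * (2 * t) := by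
      rw [ht]
      have e1 : 4 * t + 2 - 1 = 4 * t + 1 := by omega
      rw [e1, Nat.choose_two_right]
      have e2 : 4 * t + 1 - 1 = 4 * t := by omega
      rw [e2]
      rw [Nat.mul_div_assoc _ (by omega : 2 ∣ 4 * t)]
      congr 1
      omega
    rw [e]; push_cast [h2]; ring
  -- homogeneous components termwise
  have hcomp : ∀ m, homogeneousComponent m F =
      ∑ i ∈ Finset.Icc 3 d, ∑ k ∈ Finset.Icc 1 (i - 1),
        if m = (d - i) + (k - 1) then
          C (f.coeff i) * (X 1 : MvPolynomial (Fin 2) K) ^ (d - i) *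
            (C ((((i - 1).choose k + 1 : ℕ) : K)) * (X 0) ^ (k - 1))
        else 0 := by
    intro m
    rw [hF, map_sum]
    refine Finset.sum_congr rfl fun i hi => ?_
    rw [Finset.mul_sum, map_sum]
    refine Finset.sum_congr rfl fun k hk => ?_
    have hhom : (C (f.coeff i) * (X 1 : MvPolynomial (Fin 2) K) ^ (d - i) *
        (C ((((i - 1).choose k + 1 : ℕ) : K)) * (X 0) ^ (k - 1))).IsHomogeneous
        ((d - i) + (k - 1)) := by
      have h1 : (C (f.coeff i) * (X 1 : MvPolynomial (Fin 2) K) ^ (d - i)).IsHomogeneous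
          (d - i) := isHomogeneous_C_mul_X_pow _ _ _
      have h2' : ((C ((((i - 1).choose k + 1 : ℕ) : K)) : MvPolynomial (Fin 2) K) *
          (X 0) ^ (k - 1)).IsHomogeneous (k - 1) := isHomogeneous_C_mul_X_pow _ _ _
      exact h1.mul h2'
    exact homogeneousComponent_of_mem ((mem_homogeneousSubmodule _ _).2 hhom)
  -- degree 0 component
  have h0 : homogeneousComponent 0 F = 0 := by
    rw [hcomp 0]
    apply Finset.sum_eq_zero
    intro i hi
    apply Finset.sum_eq_zero
    intro k hk
    simp only [Finset.mem_Icc] at hi hk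
    by_cases h : 0 = (d - i) + (k - 1)
    · rw [if_pos h]
      have hid : i = d := by omega
      have hk1 : k = 1 := by omega
      subst hk1; rw [hid]
      have : (d - 1).choose 1 + 1 = d := by
        rw [Nat.choose_one_right]; omega
      rw [this, hdK]
      simp
    · rw [if_neg h]
  -- degree 1 component
  have h1 : homogeneousComponent 1 F =
      C (f.coeff d) * (X 0 : MvPolynomial (Fin 2) K) + C (f.coeff (d - 1)) * X 1 := by
    rw [hcomp 1]
    rw [← Finset.sum_subset (show ({d - 1, d} : Finset ℕ) ⊆ Finset.Icc 3 d by
        intro x hx; simp only [Finset.mem_insert, Finset.mem_singleton] at hx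
        simp only [Finset.mem_Icc]; omega)
      (by
        intro i hi hnot
        simp only [Finset.mem_Icc] at hi
        simp only [Finset.mem_insert, Finset.mem_singleton, not_or] at hnot
        apply Finset.sum_eq_zero
        intro k hk
        simp only [Finset.mem_Icc] at hk
        rw [if_neg]; omega)]
    rw [Finset.sum_pair (by omega : d - 1 ≠ d)]
    have gd1 : (∑ k ∈ Finset.Icc 1 (d - 1 - 1),
        if 1 = (d - (d - 1)) + (k - 1) then
          C (f.coeff (d - 1)) * (X 1 : MvPolynomial (Fin 2) K) ^ (d - (d - 1)) *
            (C ((((d - 1 - 1).choose k + 1 : ℕ) : K)) * (X 0) ^ (k - 1))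
        else 0) = C (f.coeff (d - 1)) * X 1 := by
      rw [Finset.sum_eq_single_of_mem 1 (by simp only [Finset.mem_Icc]; omega)]
      · rw [if_pos (by omega)]
        have e1 : d - (d - 1) = 1 := by omega
        have e2 : (d - 1 - 1).choose 1 + 1 = d - 1 := by
          rw [Nat.choose_one_right]; omega
        rw [e1, e2, hd1K]
        simp
      · intro k hk hne
        simp only [Finset.mem_Icc] at hk
        rw [if_neg]; omega
    have gd : (∑ k ∈ Finset.Icc 1 (d - 1),
        if 1 = (d - d) + (k - 1) then
          C (f.coeff d) * (X 1 : MvPolynomial (Fin 2) K) ^ (d - d) *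
            (C ((((d - 1).choose k + 1 : ℕ) : K)) * (X 0) ^ (k - 1))
        else 0) = C (f.coeff d) * X 0 := by
      rw [Finset.sum_eq_single_of_mem 2 (by simp only [Finset.mem_Icc]; omega)]
      · rw [if_pos (by omega)]
        have e1 : d - d = 0 := by omega
        rw [e1]
        push_cast [hchK]
        simp
      · intro k hk hne
        simp only [Finset.mem_Icc] at hk
        rw [if_neg]; omega
    rw [gd1, gd]
    ring
  -- constant coefficient
  have hc0 : coeff 0 F = 0 := by
    have := h0
    rw [homogeneousComponent_zero] at this
    exact (C_eq_zero).mp this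
  -- key nonzero coefficient
  have hkey : coeff (Finsupp.single (0 : Fin 2) 1) F = f.coeff d := by
    have hco := coeff_homogeneousComponent (σ := Fin 2) (R := K) 1 F (Finsupp.single 0 1)
    rw [h1] at hco
    have hdeg : (Finsupp.single (0 : Fin 2) 1).degree = 1 := by simp [Finsupp.degree_single]
    rw [if_pos hdeg] at hco
    rw [← hco]
    simp [coeff_X', Finsupp.single_eq_single_iff]
  have hne : C (f.coeff d) * (X 0 : MvPolynomial (Fin 2) K) + C (f.coeff (d - 1)) * X 1 ≠ 0 := by
    intro h
    apply hAd
    have := congrArg (coeff (Finsupp.single (0 : Fin 2) 1)) h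
    simpa [coeff_X', Finsupp.single_eq_single_iff] using this
  -- min degree is 1
  have hminmem : (1 : ℕ) ∈ {m : ℕ | ∃ s ∈ F.support, (s.sum fun _ e => e) = m} := by
    refine ⟨Finsupp.single 0 1, ?_, ?_⟩
    · rw [mem_support_iff, hkey]; exact hAd
    · simp
  have hmin : minMonomialDeg F = 1 := by
    unfold minMonomialDeg
    refine le_antisymm (Nat.sInf_le hminmem) ?_
    rw [Nat.one_le_iff_ne_zero]
    intro h
    rcases (Nat.sInf_eq_zero.mp h) with h' | h'
    · obtain ⟨s, hs, hsum⟩ := h'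
      have hs0 : s = 0 := by
        ext i
        by_cases hi : i ∈ s.support
        · exact (Finset.sum_eq_zero_iff.mp hsum) i hi
        · simpa using Finsupp.notMem_support_iff.mp hi
      rw [hs0, mem_support_iff] at hs
      exact hs hc0
    · rw [Set.eq_empty_iff_forall_notMem] at h'
      exact h' 1 hminmem
  refine ⟨?_, h0, h1, hne, ?_⟩
  · have hv : ![(0 : K), 0] = (0 : Fin 2 → K) := by
      funext i; fin_cases i <;> rfl
    rw [hv, eval_zero, constantCoeff_eq]
    exact hc0
  · unfold tangentCone
    rw [hmin, h1]
end
end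

section
/- Let q be a power of 2 and let f = Σ_{i=0}^d A_i X^i ∈ F_q[X] with A_d ≠ 0 and d ≥ 3. Define F ∈ F_q[X,Y] by F(X,Y) = Σ_{i=3}^d A_i Y^{d-i} Σ_{k=1}^{i-1} (binom(i-1,k)+1) X^{k-1}. If f is APN on F_q, then every point (x,y) ∈ F_q × F_q with F(x,y) = 0 satisfies x = 0, x = 1, or y = 0. -/
open MvPolynomial

theorem keylemma (K : Type*) [Field K] (h2 : (2:K) = 0) (x : K) (j : ℕ) :
    x * (x+1) * ∑ k ∈ Finset.Icc 1 j, ((j.choose k + 1 : ℕ) : K) * x^(k-1)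
      = (x+1)^(j+1) + x^(j+1) + 1 := by
  set T : K := ∑ k ∈ Finset.Icc 1 j, x^k with hT
  have hx : x * ∑ k ∈ Finset.Icc 1 j, ((j.choose k + 1 : ℕ) : K) * x^(k-1)
      = ∑ k ∈ Finset.Icc 1 j, (((j.choose k : ℕ) : K) * x^k + x^k) := by
    rw [Finset.mul_sum]
    refine Finset.sum_congr rfl fun k hk => ?_
    obtain ⟨hk1, hk2⟩ := Finset.mem_Icc.mp hk
    have hxk : x * x^(k-1) = x^k := by
      rw [← pow_succ', Nat.sub_add_cancel hk1]
    push_cast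
    linear_combination ((j.choose k : K) + 1) * hxk
  have hA : ∑ k ∈ Finset.Icc 1 j, ((j.choose k : ℕ) : K) * x^k = (x+1)^j - 1 := by
    have h := add_pow x 1 j
    simp only [one_pow, mul_one] at h
    rw [Finset.range_eq_Ico, Finset.sum_eq_sum_Ico_succ_bot (Nat.succ_pos j)] at h
    simp only [pow_zero, Nat.choose_zero_right, Nat.cast_one, mul_one, one_mul] at h
    rw [← Finset.Ico_add_one_right_eq_Icc, h, add_sub_cancel_left]
    exact Finset.sum_congr rfl fun k _ => mul_comm _ _
  have hB : T * (x - 1) = x^(j+1) - x := by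
    have hg := geom_sum_mul x j
    have hT2 : T = x * ∑ k ∈ Finset.range j, x^k := by
      rw [hT, Finset.mul_sum, ← Finset.Ico_add_one_right_eq_Icc, Finset.sum_Ico_eq_sum_range]
      simp [pow_succ, pow_add, mul_comm, pow_succ']
    rw [hT2]
    calc x * (∑ k ∈ Finset.range j, x^k) * (x-1)
        = x * ((∑ k ∈ Finset.range j, x^k) * (x-1)) := by ring
    _ = x * (x^j - 1) := by rw [hg]
    _ = x^(j+1) - x := by ring
  have hxS : x * ∑ k ∈ Finset.Icc 1 j, ((j.choose k + 1 : ℕ) : K) * x^(k-1)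
      = ((x+1)^j - 1) + T := by
    rw [hx, Finset.sum_add_distrib, hA, hT]
  linear_combination (x+1) * hxS + hB + (T - x - 1) * h2

theorem apn_rational_points_of_F
    {K : Type*} [Field K] [Fintype K] (n : ℕ) (hn : 1 ≤ n)
    (hcard : Fintype.card K = 2 ^ n)
    (f : Polynomial K) (d : ℕ) (hd : f.natDegree = d) (hd3 : 3 ≤ d)
    (hAd : f.coeff d ≠ 0)
    (F : MvPolynomial (Fin 2) K)
    (hF : F = ∑ i ∈ Finset.Icc 3 d, C (f.coeff i) * (X 1 : MvPolynomial (Fin 2) K) ^ (d - i) *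
        ∑ k ∈ Finset.Icc 1 (i - 1), C ((((i - 1).choose k + 1 : ℕ) : K)) * (X 0) ^ (k - 1))
    (hapn : ∀ ε : K, ε ≠ 0 → ∀ b : K,
      {x : K | f.eval (x + ε) + f.eval x = b}.ncard ≤ 2) :
    ∀ x y : K, eval ![x, y] F = 0 → x = 0 ∨ x = 1 ∨ y = 0 := by
  intro x y hxy
  by_contra hcon
  push_neg at hcon
  obtain ⟨hx0, hx1, hy0⟩ := hcon
  -- characteristic 2
  have h2 : (2:K) = 0 := by
    have hc := FiniteField.cast_card_eq_zero K
    rw [hcard] at hc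
    push_cast at hc
    exact (pow_eq_zero_iff (by omega)).mp hc
  set ε : K := y⁻¹ with hεdef
  have hεne : ε ≠ 0 := inv_ne_zero hy0
  have hx1' : x + 1 ≠ 0 := by
    intro h; apply hx1; linear_combination h - h2
  -- evaluate F
  have hev : eval ![x,y] F = ∑ i ∈ Finset.Icc 3 d, f.coeff i * y^(d-i) *
      (∑ k ∈ Finset.Icc 1 (i-1), (((i-1).choose k + 1 : ℕ) : K) * x^(k-1)) := by
    rw [hF]
    simp [map_sum, eval_C, eval_X, Matrix.cons_val_zero, Matrix.cons_val_one, Matrix.head_cons]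
  -- multiply by x(x+1)
  have hsum : ∑ i ∈ Finset.Icc 3 d, f.coeff i * y^(d-i) * ((x+1)^i + x^i + 1) = 0 := by
    have hterm : ∀ i ∈ Finset.Icc 3 d,
        f.coeff i * y^(d-i) * ((x+1)^i + x^i + 1)
          = x*(x+1)*(f.coeff i * y^(d-i) *
            (∑ k ∈ Finset.Icc 1 (i-1), (((i-1).choose k + 1 : ℕ) : K) * x^(k-1))) := by
      intro i hi
      obtain ⟨hi1, hi2⟩ := Finset.mem_Icc.mp hi
      have h1 : 1 ≤ i := by omega
      have hk := keylemma K h2 x (i-1)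
      rw [Nat.sub_add_cancel h1] at hk
      linear_combination (f.coeff i * y^(d-i)) * hk.symm
    calc ∑ i ∈ Finset.Icc 3 d, f.coeff i * y^(d-i) * ((x+1)^i + x^i + 1)
        = x*(x+1) * ∑ i ∈ Finset.Icc 3 d, f.coeff i * y^(d-i) *
            (∑ k ∈ Finset.Icc 1 (i-1), (((i-1).choose k + 1 : ℕ) : K) * x^(k-1)) := by
          rw [Finset.mul_sum]; exact Finset.sum_congr rfl hterm
    _ = x*(x+1) * eval ![x,y] F := by rw [hev]
    _ = 0 := by rw [hxy, mul_zero]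
  -- extend to full range
  have hext : ∑ i ∈ Finset.range (d+1), f.coeff i * y^(d-i) * ((x+1)^i + x^i + 1)
      = f.coeff 0 * y^d := by
    rw [Finset.range_eq_Ico, ← Finset.sum_Ico_consecutive _ (Nat.zero_le 3) (by omega : 3 ≤ d+1),
      show Finset.Ico 3 (d+1) = Finset.Icc 3 d from Finset.Ico_add_one_right_eq_Icc 3 d, hsum, add_zero,
      show Finset.Ico 0 3 = Finset.range 3 by decide]
    rw [Finset.sum_range_succ, Finset.sum_range_succ, Finset.sum_range_one]
    simp only [pow_zero, pow_one, Nat.sub_zero]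
    linear_combination (f.coeff 1 * y^(d-1) * (x+1) + f.coeff 2 * y^(d-2) * (x^2+x+1)
      + f.coeff 0 * y^d) * h2
  -- rewrite as evaluations of f
  have heval : ∀ z : K, f.eval z = ∑ i ∈ Finset.range (d+1), f.coeff i * z^i := by
    intro z
    exact Polynomial.eval_eq_sum_range' (by omega) z
  have h3 : ∑ i ∈ Finset.range (d+1), f.coeff i * y^(d-i) * ((x+1)^i + x^i + 1)
      = y^d * (f.eval (ε*(x+1)) + f.eval (ε*x) + f.eval ε) := by
    rw [heval (ε*(x+1)), heval (ε*x), heval ε, ← Finset.sum_add_distrib,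
      ← Finset.sum_add_distrib, Finset.mul_sum]
    refine Finset.sum_congr rfl fun i hi => ?_
    have hle : i ≤ d := by
      have := Finset.mem_range.mp hi; omega
    have hyi : y^(d-i) = y^d * ε^i := by
      rw [hεdef, inv_pow, eq_comm, mul_inv_eq_iff_eq_mul₀ (pow_ne_zero _ hy0),
        ← pow_add, Nat.sub_add_cancel hle]
    rw [mul_pow, mul_pow, hyi]; ring
  -- key relation
  have hkey : f.eval (ε*(x+1)) + f.eval (ε*x) + f.eval ε = f.eval 0 := by
    rw [h3] at hext
    have hyd : y^d ≠ 0 := pow_ne_zero _ hy0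
    have := mul_left_cancel₀ hyd (hext.trans (mul_comm _ _))
    rw [this, ← Polynomial.coeff_zero_eq_eval_zero]
  set b : K := f.eval ε + f.eval 0 with hbdef
  have hS := hapn ε hεne b
  have m0 : (0:K) ∈ {z : K | f.eval (z + ε) + f.eval z = b} := by
    simp only [Set.mem_setOf_eq, zero_add, hbdef]
  have m1 : ε ∈ {z : K | f.eval (z + ε) + f.eval z = b} := by
    simp only [Set.mem_setOf_eq, hbdef]
    have hee : ε + ε = 0 := by linear_combination ε * h2
    rw [hee, add_comm]
  have m2 : ε*x ∈ {z : K | f.eval (z + ε) + f.eval z = b} := by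
    simp only [Set.mem_setOf_eq, hbdef]
    have hrw : ε*x + ε = ε*(x+1) := by ring
    rw [hrw]
    linear_combination hkey - f.eval ε * h2
  have m3 : ε*(x+1) ∈ {z : K | f.eval (z + ε) + f.eval z = b} := by
    simp only [Set.mem_setOf_eq, hbdef]
    have hrw : ε*(x+1) + ε = ε*x := by linear_combination ε * h2
    rw [hrw]
    linear_combination hkey - f.eval ε * h2
  have ne01 : (0:K) ≠ ε := hεne.symm
  have ne02 : (0:K) ≠ ε*x := (mul_ne_zero hεne hx0).symm
  have ne03 : (0:K) ≠ ε*(x+1) := (mul_ne_zero hεne hx1').symm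
  have ne12 : ε ≠ ε*x := by
    intro h
    exact hx1 (mul_left_cancel₀ hεne (by rw [mul_one, ← h])).symm
  have ne13 : ε ≠ ε*(x+1) := by
    intro h
    have := mul_left_cancel₀ hεne (by rw [mul_one, ← h] : ε * 1 = ε * (x+1))
    exact hx0 (by linear_combination this.symm)
  have ne23 : ε*x ≠ ε*(x+1) := by
    intro h
    have := mul_left_cancel₀ hεne h
    exact one_ne_zero (by linear_combination this.symm : (1:K) = 0)
  have hsub : ({0, ε, ε*x, ε*(x+1)} : Set K) ⊆ {z : K | f.eval (z + ε) + f.eval z = b} := by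
    intro z hz
    rcases hz with rfl | rfl | rfl | rfl
    · exact m0
    · exact m1
    · exact m2
    · exact m3
  have h4 : ({0, ε, ε*x, ε*(x+1)} : Set K).ncard = 4 := by
    rw [Set.ncard_insert_of_notMem (by
        simp only [Set.mem_insert_iff, Set.mem_singleton_iff]; push_neg
        exact ⟨ne01, ne02, ne03⟩),
      Set.ncard_insert_of_notMem (by
        simp only [Set.mem_insert_iff, Set.mem_singleton_iff]; push_neg
        exact ⟨ne12, ne13⟩),
      Set.ncard_insert_of_notMem (by simp only [Set.mem_singleton_iff]; exact ne23),
      Set.ncard_singleton]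
  have : (4:ℕ) ≤ 2 := by
    calc (4:ℕ) = ({0, ε, ε*x, ε*(x+1)} : Set K).ncard := h4.symm
    _ ≤ ({z : K | f.eval (z + ε) + f.eval z = b}).ncard :=
        Set.ncard_le_ncard hsub (Set.toFinite _)
    _ ≤ 2 := hS
  omega
end
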